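/- arXiv:2412.17500 — 4 statements merged into one kernel-verified Lean document; each statement's English description precedes it below -/
import Mathlib

section
/- For every integer n ≥ 4, the oriented Ramsey number of CP(2,2;n−4) equals n+1; that is, every tournament on n+1 vertices contains a copy of CP(2,2;n−4), and there is a tournament on n vertices containing no copy of CP(2,2;n−4). -/
/-- A tournament: an irreflexive relation such that for any two distinct
vertices exactly one of the two possible arcs is present. -/
def IsTournament {V : Type*} (r : V → V → Prop) : Prop :=
  (∀ x, ¬ r x x) ∧ ∀ x y, x ≠ y → (r x y ↔ ¬ r y x)

/-- `Contains r e` : the digraph `r` contains a copy of the oriented graph `e`. -/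
def Contains {V : Type*} {H : Type*} (r : V → V → Prop) (e : H → H → Prop) : Prop :=
  ∃ φ : H → V, Function.Injective φ ∧ ∀ u v, e u v → r (φ u) (φ v)

/-- The antidirected cycle `AC_{2k}` on `ZMod (2k)`: the arcs go from each
even vertex `u` to its two neighbours `u + 1` and `u - 1` on the cycle. -/
def acArc (k : ℕ) (u v : ZMod (2 * k)) : Prop :=
  (∃ j : ZMod (2 * k), u = 2 * j) ∧ (v = u + 1 ∨ v = u - 1)

/-- `CP(2,2;ℓ)`: the oriented graph on `ℓ + 4` vertices (0-indexed; vertex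
`v_i` of the paper is index `i - 1`) with arcs
`(0,1), (0,2), (1,3), (2,3)` and `(j, j+1)` for `3 ≤ j`. In particular
`cpArc 0` is the oriented 4-cycle `C(2,2)`. -/
def cpArc (ℓ : ℕ) (u v : Fin (ℓ + 4)) : Prop :=
  (u.val = 0 ∧ v.val = 1) ∨ (u.val = 0 ∧ v.val = 2) ∨
  (u.val = 1 ∧ v.val = 3) ∨ (u.val = 2 ∧ v.val = 3) ∨
  (3 ≤ u.val ∧ v.val = u.val + 1)

set_option maxHeartbeats 1000000

/-- lower-bound tournament on `Fin (m+4)` : 3-cycle on {0,1,2} dominating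
the transitive tournament on {3,...,m+3}. -/
def lowArc (m : ℕ) (i j : Fin (m + 4)) : Prop :=
  (i.val < 3 ∧ j.val < 3 ∧ (i.val + 1) % 3 = j.val) ∨
  (i.val < 3 ∧ 3 ≤ j.val) ∨
  (3 ≤ i.val ∧ 3 ≤ j.val ∧ i.val < j.val)

lemma lowArc_tournament (m : ℕ) : IsTournament (lowArc m) := by
  constructor
  · intro x h
    rcases h with ⟨h1, h2, h3⟩ | ⟨h1, h2⟩ | ⟨h1, h2, h3⟩ <;> omega
  · intro x y hxy
    have : x.val ≠ y.val := fun h => hxy (Fin.ext h)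
    simp only [lowArc]
    omega

lemma low_no_cp (m : ℕ) : ¬ Contains (lowArc m) (cpArc m) := by
  rintro ⟨φ, hinj, harc⟩
  -- index abbreviations
  have hlt : ∀ k : ℕ, k < m + 4 → k < m + 4 := fun k h => h
  set i0 : Fin (m+4) := ⟨0, by omega⟩ with hi0
  set i1 : Fin (m+4) := ⟨1, by omega⟩ with hi1
  set i2 : Fin (m+4) := ⟨2, by omega⟩ with hi2
  set i3 : Fin (m+4) := ⟨3, by omega⟩ with hi3
  -- arcs of the copy
  have a01 : lowArc m (φ i0) (φ i1) := harc _ _ (by left; exact ⟨rfl, rfl⟩)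
  have a02 : lowArc m (φ i0) (φ i2) := harc _ _ (by right; left; exact ⟨rfl, rfl⟩)
  have a13 : lowArc m (φ i1) (φ i3) := harc _ _ (by right; right; left; exact ⟨rfl, rfl⟩)
  have a23 : lowArc m (φ i2) (φ i3) := harc _ _ (by right; right; right; left; exact ⟨rfl, rfl⟩)
  have h12 : φ i1 ≠ φ i2 := fun h => by
    have := hinj h; simp [hi1, hi2, Fin.ext_iff] at this
  -- Claim A: for every k ≥ 3, (φ k).val ≥ 3.
  have claimA : ∀ j : ℕ, (h4 : j < m + 4) → 3 ≤ j → 3 ≤ (φ ⟨j, h4⟩).val := by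
    intro j h4 h3
    induction j with
    | zero => omega
    | succ p ih =>
      rcases Nat.lt_or_ge p 3 with hp | hp
      · -- p + 1 = 3, base case
        have hp3 : p = 2 := by omega
        subst hp3
        -- φ i3 has two distinct in-neighbours φ i1 φ i2
        by_contra hcon
        push_neg at hcon
        have e3 : (⟨(2:ℕ)+1, h4⟩ : Fin (m+4)) = i3 := by simp [hi3]
        rw [e3] at hcon
        -- in-neighbour of a cycle vertex is unique
        have u1 : (φ i1).val < 3 ∧ ((φ i1).val + 1) % 3 = (φ i3).val := by
          rcases a13 with ⟨x1, x2, x3⟩ | ⟨x1, x2⟩ | ⟨x1, x2, x3⟩ <;> first | exact ⟨x1, x3⟩ | omega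
        have u2 : (φ i2).val < 3 ∧ ((φ i2).val + 1) % 3 = (φ i3).val := by
          rcases a23 with ⟨x1, x2, x3⟩ | ⟨x1, x2⟩ | ⟨x1, x2, x3⟩ <;> first | exact ⟨x1, x3⟩ | omega
        have : (φ i1).val = (φ i2).val := by omega
        exact h12 (Fin.ext this)
      · -- step
        have hp4 : p < m + 4 := by omega
        have ihp := ih hp4 hp
        have acons : lowArc m (φ ⟨p, hp4⟩) (φ ⟨p+1, h4⟩) := by
          apply harc
          right; right; right; right
          exact ⟨hp, rfl⟩
        rcases acons with ⟨x1, x2, x3⟩ | ⟨x1, x2⟩ | ⟨x1, x2, x3⟩ <;> omega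
  -- pigeonhole: φ i1 (and φ i2) cannot land in the chain
  have chain_card : (Finset.univ.filter (fun t : Fin (m+4) => 3 ≤ t.val)).card = m + 1 := by
    have : Finset.univ.filter (fun t : Fin (m+4) => 3 ≤ t.val)
        = Finset.univ \ {i0, i1, i2} := by
      ext t
      simp only [Finset.mem_filter, Finset.mem_univ, true_and, Finset.mem_sdiff,
        Finset.mem_insert, Finset.mem_singleton, hi0, hi1, hi2, Fin.ext_iff]
      omega
    rw [this, Finset.card_sdiff_of_subset (by intro t ht; exact Finset.mem_univ t)]
    have c3 : ({i0, i1, i2} : Finset (Fin (m+4))).card = 3 := by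
      rw [Finset.card_insert_of_notMem, Finset.card_insert_of_notMem,
        Finset.card_singleton]
      · simp [hi1, hi2, Fin.ext_iff]
      · simp [hi0, hi1, hi2, Fin.ext_iff]
    rw [c3, Finset.card_univ, Fintype.card_fin]
    omega
  have pigeon : ∀ i : Fin (m+4), i.val < 3 → i ≠ i0 → 3 ≤ (φ i).val → False := by
    intro i hi hne hphi
    -- source: insert i {k : 3 ≤ k.val}, all mapped into the chain
    set tgt := Finset.univ.filter (fun t : Fin (m+4) => 3 ≤ t.val) with htgt
    set src := insert i (Finset.univ.filter (fun k : Fin (m+4) => 3 ≤ k.val)) with hsrc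
    have hmaps : ∀ k ∈ src, φ k ∈ tgt := by
      intro k hk
      rw [hsrc] at hk
      rcases Finset.mem_insert.mp hk with h | h
      · subst h; simp [htgt, hphi]
      · simp only [Finset.mem_filter] at h
        have := claimA k.val k.isLt h.2
        simp only [htgt, Finset.mem_filter, Finset.mem_univ, true_and]
        exact this
    have hcard_src : src.card = m + 2 := by
      rw [hsrc, Finset.card_insert_of_notMem, chain_card]
      simp only [Finset.mem_filter]
      omega
    have := Finset.exists_ne_map_eq_of_card_lt_of_maps_to
      (by rw [hcard_src, chain_card]; omega) hmaps
    obtain ⟨x, hx, y, hy, hxy, heq⟩ := this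
    exact hxy (hinj heq)
  -- now φ i1 and φ i2 lie in the cycle {0,1,2}
  have hp1 : (φ i1).val < 3 := by
    by_contra h
    push_neg at h
    -- i1.val = 1 < 3
    exact pigeon i1 (by simp [hi1]) (by simp [hi0, hi1, Fin.ext_iff]) h
  have hp2 : (φ i2).val < 3 := by
    by_contra h
    push_neg at h
    exact pigeon i2 (by simp [hi2]) (by simp [hi0, hi2, Fin.ext_iff]) h
  -- finally φ i0 beats both: forces φ i1 = φ i2
  have u1 : (φ i0).val < 3 ∧ ((φ i0).val + 1) % 3 = (φ i1).val := by
    rcases a01 with ⟨x1, x2, x3⟩ | ⟨x1, x2⟩ | ⟨x1, x2, x3⟩ <;> first | exact ⟨x1, x3⟩ | omega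
  have u2 : (φ i0).val < 3 ∧ ((φ i0).val + 1) % 3 = (φ i2).val := by
    rcases a02 with ⟨x1, x2, x3⟩ | ⟨x1, x2⟩ | ⟨x1, x2, x3⟩ <;> first | exact ⟨x1, x3⟩ | omega
  exact h12 (Fin.ext (by omega))

open Classical

section Reach

variable {V : Type*} [DecidableEq V] {r : V → V → Prop}

/-- reachability inside a finset. -/
def reachIn (r : V → V → Prop) (s : Finset V) (x y : V) : Prop :=
  Relation.ReflTransGen (fun a b => b ∈ s ∧ r a b) x y

lemma reachIn_mono {s t : Finset V} (hst : s ⊆ t) {x y : V}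
    (h : reachIn r s x y) : reachIn r t x y :=
  Relation.ReflTransGen.mono (p := fun a b => b ∈ t ∧ r a b) (fun a b hab => ⟨hst hab.1, hab.2⟩) _ _ h

lemma reachIn_single {s : Finset V} {x y : V} (hy : y ∈ s) (hr : r x y) :
    reachIn r s x y :=
  Relation.ReflTransGen.single ⟨hy, hr⟩

lemma reachIn_trans {s : Finset V} {x y z : V} (h1 : reachIn r s x y)
    (h2 : reachIn r s y z) : reachIn r s x z :=
  Relation.ReflTransGen.trans h1 h2

lemma tourn_flip (hT : IsTournament r) {x y : V} (hxy : x ≠ y) (h : ¬ r x y) :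
    r y x := by
  by_contra h2
  exact h ((hT.2 x y hxy).mpr h2)

lemma tourn_irrefl (hT : IsTournament r) {x y : V} (h : r x y) : x ≠ y := by
  rintro rfl; exact hT.1 x h

/-- King lemma: any nonempty finite tournament has a vertex reaching all. -/
lemma exists_reaching (hT : IsTournament r) {s : Finset V} (hs : s.Nonempty) :
    ∃ d ∈ s, ∀ y ∈ s, reachIn r s d y := by
  obtain ⟨d, hd, hmax⟩ := s.exists_max_image (fun x => (s.filter (fun z => r x z)).card) hs
  refine ⟨d, hd, ?_⟩
  intro y hy
  by_cases hyd : y = d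
  · subst hyd; exact Relation.ReflTransGen.refl
  by_cases hdy : r d y
  · exact reachIn_single hy hdy
  have hyd' : r y d := tourn_flip hT (Ne.symm hyd) hdy
  -- find intermediate z
  by_cases hz : ∃ z ∈ s, r d z ∧ r z y
  · obtain ⟨z, hzs, h1, h2⟩ := hz
    exact reachIn_trans (reachIn_single hzs h1) (reachIn_single hy h2)
  exfalso
  push_neg at hz
  have hsub : insert d (s.filter (fun z => r d z)) ⊆ s.filter (fun z => r y z) := by
    intro z hz'
    rcases Finset.mem_insert.mp hz' with rfl | hz'
    · exact Finset.mem_filter.mpr ⟨hd, hyd'⟩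
    · obtain ⟨hzs, hdz⟩ := Finset.mem_filter.mp hz'
      have hzy : z ≠ y := by rintro rfl; exact hdy hdz
      have := hz z hzs hdz
      exact Finset.mem_filter.mpr ⟨hzs, tourn_flip hT hzy this⟩
  have h1 : (s.filter (fun z => r d z)).card + 1 ≤ (s.filter (fun z => r y z)).card := by
    have := Finset.card_le_card hsub
    rwa [Finset.card_insert_of_notMem (by
      simp only [Finset.mem_filter, not_and]
      intro _; exact hT.1 d)] at this
  have h2 := hmax y hy
  omega

/-- Hamiltonian path from a vertex reaching everything. -/
lemma ham_from_reaching (hT : IsTournament r) :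
    ∀ (n : ℕ) (s : Finset V), s.card = n → ∀ d ∈ s, (∀ y ∈ s, reachIn r s d y) →
    ∃ l : List V, l.Chain' r ∧ l.Nodup ∧ l.toFinset = s ∧ l.head? = some d := by
  intro n
  induction n with
  | zero => intro s hs d hd _; simp [Finset.card_eq_zero.mp hs] at hd
  | succ n ih =>
    intro s hs d hd hreach
    set s' := s.erase d with hs'
    have hcard' : s'.card = n := by
      rw [hs', Finset.card_erase_of_mem hd, hs]; rfl
    by_cases hemp : s' = ∅
    · -- s = {d}
      have hsd : s = {d} := by
        apply Finset.eq_singleton_iff_unique_mem.mpr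
        refine ⟨hd, ?_⟩
        intro x hx
        by_contra hxd
        have : x ∈ s' := Finset.mem_erase.mpr ⟨hxd, hx⟩
        rw [hemp] at this
        exact absurd this (Finset.notMem_empty x)
      refine ⟨[d], List.isChain_singleton _, by simp, by simp [hsd], rfl⟩
    · have hne' : s'.Nonempty := Finset.nonempty_of_ne_empty hemp
      set S := s'.filter (fun y => ∀ z ∈ s', reachIn r s' y z) with hS
      have hSne : S.Nonempty := by
        obtain ⟨k, hk, hkr⟩ := exists_reaching hT hne'
        exact ⟨k, Finset.mem_filter.mpr ⟨hk, hkr⟩⟩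
      -- find a ∈ S with r d a
      have hexa : ∃ a ∈ S, r d a := by
        by_contra hcon
        push_neg at hcon
        obtain ⟨s₀, hs₀⟩ := hSne
        have hs₀s : s₀ ∈ s := Finset.mem_of_mem_erase (Finset.mem_filter.mp hs₀).1
        have hclosed : ∀ y, reachIn r s d y → y = d ∨ (y ∈ s' ∧ y ∉ S) := by
          intro y hy
          induction hy with
          | refl => left; rfl
          | tail hp hstep ihp =>
            rename_i p q
            obtain ⟨hqs, hrpq⟩ := hstep
            by_cases h : q = d
            · left; exact h
            right
            refine ⟨Finset.mem_erase.mpr ⟨h, hqs⟩, ?_⟩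
            intro hqS
            rcases ihp with rfl | ⟨hps', hpS⟩
            · exact hcon q hqS hrpq
            · apply hpS
              rw [hS]
              refine Finset.mem_filter.mpr ⟨hps', ?_⟩
              intro z hz
              have hq' : reachIn r s' p q :=
                reachIn_single (Finset.mem_erase.mpr ⟨h, hqs⟩) hrpq
              exact reachIn_trans hq' ((Finset.mem_filter.mp hqS).2 z hz)
        rcases hclosed s₀ (hreach s₀ hs₀s) with rfl | ⟨_, hnS⟩
        · exact (Finset.mem_erase.mp (Finset.mem_filter.mp hs₀).1).1 rfl
        · exact hnS hs₀
      obtain ⟨a, haS, hda⟩ := hexa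
      obtain ⟨has', hareach⟩ := Finset.mem_filter.mp haS
      obtain ⟨l', hc', hnd', htf', hh'⟩ := ih s' hcard' a has' hareach
      refine ⟨d :: l', ?_, ?_, ?_, rfl⟩
      · cases l' with
        | nil => exact List.isChain_singleton _
        | cons b t =>
          have hb : b = a := by simpa using hh'
          subst hb
          exact List.IsChain.cons_cons hda hc'
      · refine List.nodup_cons.mpr ⟨?_, hnd'⟩
        intro hdl
        have : d ∈ s' := by rw [← htf']; exact List.mem_toFinset.mpr hdl
        exact (Finset.mem_erase.mp this).1 rfl
      · rw [List.toFinset_cons, htf', hs', Finset.insert_erase hd]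

end Reach

-- appended to ham.lean context: V, r, hT, DecidableEq
-- Helper A : among 4 distinct vertices there is one beating two others.
section HelperA
variable {V : Type*} [DecidableEq V] {r : V → V → Prop}

lemma helperA' (hT : IsTournament r) {x1 x2 x3 x4 : V}
    (h12 : x1 ≠ x2) (h13 : x1 ≠ x3) (h14 : x1 ≠ x4) (h23 : x2 ≠ x3)
    (h24 : x2 ≠ x4) (h34 : x3 ≠ x4) (hr12 : r x1 x2) :
    ∃ q r1 r2 y, ({q, r1, r2, y} : Finset V) = {x1, x2, x3, x4} ∧
      q ≠ r1 ∧ q ≠ r2 ∧ q ≠ y ∧ r1 ≠ r2 ∧ r1 ≠ y ∧ r2 ≠ y ∧ r q r1 ∧ r q r2 := by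
  by_cases h13' : r x1 x3
  · exact ⟨x1, x2, x3, x4, rfl, h12, h13, h14, h23, h24, h34, hr12, h13'⟩
  have h31 : r x3 x1 := tourn_flip hT h13 h13'
  by_cases h32 : r x3 x2
  · refine ⟨x3, x1, x2, x4, ?_, h13.symm, h23.symm, h34, h12, h14, h24, h31, h32⟩
    ext z; simp only [Finset.mem_insert, Finset.mem_singleton]; tauto
  have h23' : r x2 x3 := tourn_flip hT h23.symm h32
  by_cases h24' : r x2 x4
  · refine ⟨x2, x3, x4, x1, ?_, h23, h24, h12.symm, h34, h13.symm, h14.symm, h23', h24'⟩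
    ext z; simp only [Finset.mem_insert, Finset.mem_singleton]; tauto
  have h42 : r x4 x2 := tourn_flip hT h24 h24'
  by_cases h43 : r x4 x3
  · refine ⟨x4, x2, x3, x1, ?_, h24.symm, h34.symm, h14.symm, h23, h12.symm, h13.symm, h42, h43⟩
    ext z; simp only [Finset.mem_insert, Finset.mem_singleton]; tauto
  have h34v : r x3 x4 := tourn_flip hT h34.symm h43
  refine ⟨x3, x1, x4, x2, ?_, h13.symm, h34, h23.symm, h14, h12, h24.symm, h31, h34v⟩
  ext z; simp only [Finset.mem_insert, Finset.mem_singleton]; tauto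

lemma helperA (hT : IsTournament r) {x1 x2 x3 x4 : V}
    (h12 : x1 ≠ x2) (h13 : x1 ≠ x3) (h14 : x1 ≠ x4) (h23 : x2 ≠ x3)
    (h24 : x2 ≠ x4) (h34 : x3 ≠ x4) :
    ∃ q r1 r2 y, ({q, r1, r2, y} : Finset V) = {x1, x2, x3, x4} ∧
      q ≠ r1 ∧ q ≠ r2 ∧ q ≠ y ∧ r1 ≠ r2 ∧ r1 ≠ y ∧ r2 ≠ y ∧ r q r1 ∧ r q r2 := by
  by_cases h : r x1 x2
  · exact helperA' hT h12 h13 h14 h23 h24 h34 h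
  · obtain ⟨q, r1, r2, y, hset, hd⟩ :=
      helperA' hT h12.symm h23 h24 h13 h14 h34 (tourn_flip hT h12 h)
    refine ⟨q, r1, r2, y, ?_, hd⟩
    rw [hset]; ext z; simp only [Finset.mem_insert, Finset.mem_singleton]; tauto

end HelperA

section Five
variable {V : Type*} [DecidableEq V] {r : V → V → Prop}

/-- explicit tournament on `Fin 5` extending the chain `0→1→2→3→4`,
parameterized by the six free bits. -/
def arc6 (b13 b14 b15 b24 b25 b35 : Bool) (i j : Fin 5) : Bool :=
  match i, j with
  | 0, 1 => true | 1, 2 => true | 2, 3 => true | 3, 4 => true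
  | 1, 0 => false | 2, 1 => false | 3, 2 => false | 4, 3 => false
  | 0, 2 => b13 | 0, 3 => b14 | 0, 4 => b15
  | 1, 3 => b24 | 1, 4 => b25 | 2, 4 => b35
  | 2, 0 => !b13 | 3, 0 => !b14 | 4, 0 => !b15
  | 3, 1 => !b24 | 4, 1 => !b25 | 4, 2 => !b35
  | _, _ => false

lemma L5six : ∀ b13 b14 b15 b24 b25 b35 : Bool,
    ∃ a b c d : Fin 5, a ≠ b ∧ a ≠ c ∧ a ≠ d ∧ b ≠ c ∧ b ≠ d ∧ c ≠ d ∧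
      arc6 b13 b14 b15 b24 b25 b35 a b = true ∧
      arc6 b13 b14 b15 b24 b25 b35 a c = true ∧
      arc6 b13 b14 b15 b24 b25 b35 b d = true ∧
      arc6 b13 b14 b15 b24 b25 b35 c d = true := by decide

/-- soundness of `arc6` w.r.t. actual tournament values along a 5-chain. -/
lemma arc6_sound (hT : IsTournament r) (x : Fin 5 → V)
    (hinj : Function.Injective x)
    (h01 : r (x 0) (x 1)) (h12 : r (x 1) (x 2)) (h23 : r (x 2) (x 3))
    (h34 : r (x 3) (x 4)) :
    ∀ i j : Fin 5,
      arc6 (decide (r (x 0) (x 2))) (decide (r (x 0) (x 3)))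
        (decide (r (x 0) (x 4))) (decide (r (x 1) (x 3)))
        (decide (r (x 1) (x 4))) (decide (r (x 2) (x 4))) i j = true →
      r (x i) (x j) := by
  have flip : ∀ i j : Fin 5, i ≠ j → ¬ r (x i) (x j) → r (x j) (x i) := by
    intro i j hij h
    exact tourn_flip hT (fun he => hij (hinj he)) h
  intro i j h
  fin_cases i <;> fin_cases j <;>
    simp only [arc6, Fin.isValue, Fin.reduceFinMk, decide_eq_true_eq, Bool.not_eq_true', decide_eq_false_iff_not] at h <;>
    first
      | exact h
      | exact h01 | exact h12 | exact h23 | exact h34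
      | (exact flip _ _ (by decide) h)
      | exact absurd h (by simp)
end Five

section Lemma5
variable {V : Type*} [DecidableEq V] {r : V → V → Prop}

lemma fin5_leftover : ∀ a b c d : Fin 5, a ≠ b → a ≠ c → a ≠ d → b ≠ c → b ≠ d → c ≠ d →
    ∃ w : Fin 5, w ≠ a ∧ w ≠ b ∧ w ≠ c ∧ w ≠ d := by decide

lemma fin5_cover : ∀ a b c d w i : Fin 5, a ≠ b → a ≠ c → a ≠ d → a ≠ w → b ≠ c → b ≠ d →
    b ≠ w → c ≠ d → c ≠ w → d ≠ w → (i = a ∨ i = b ∨ i = c ∨ i = d ∨ i = w) := by decide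

lemma lemma5 (hT : IsTournament r) {s : Finset V} (hs : s.card = 5) :
    ∃ a b c d w, a ∈ s ∧ b ∈ s ∧ c ∈ s ∧ d ∈ s ∧ w ∈ s ∧
      a ≠ b ∧ a ≠ c ∧ a ≠ d ∧ a ≠ w ∧ b ≠ c ∧ b ≠ d ∧ b ≠ w ∧
      c ≠ d ∧ c ≠ w ∧ d ≠ w ∧
      (∀ y ∈ s, y = a ∨ y = b ∨ y = c ∨ y = d ∨ y = w) ∧
      r a b ∧ r a c ∧ r b d ∧ r c d := by
  have hne : s.Nonempty := by
    rw [← Finset.card_pos, hs]; omega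
  obtain ⟨d₀, hd₀, hreach⟩ := exists_reaching hT hne
  obtain ⟨l, hch, hnd, htf, _⟩ := ham_from_reaching hT 5 s hs d₀ hd₀ hreach
  have hlen : l.length = 5 := by
    have := List.toFinset_card_of_nodup hnd
    rw [htf, hs] at this; omega
  have hxlt : ∀ i : Fin 5, (i : ℕ) < l.length := fun i => by omega
  set x : Fin 5 → V := fun i => l.get ⟨i.val, hxlt i⟩ with hx
  have hxinj : Function.Injective x := by
    intro i j hij
    have := (List.nodup_iff_injective_get.mp hnd) hij
    simpa [Fin.ext_iff] using this
  have hxmem : ∀ i, x i ∈ s := by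
    intro i
    rw [← htf]
    exact List.mem_toFinset.mpr (List.get_mem l _)
  have hcons : ∀ i : ℕ, (h : i + 1 < 5) →
      r (x ⟨i, by omega⟩) (x ⟨i+1, h⟩) :=
    fun i h => List.isChain_iff_getElem.mp hch i (by omega)
  obtain ⟨a, b, c, d, hab, hac, had, hbc, hbd, hcd, g1, g2, g3, g4⟩ :=
    L5six (decide (r (x 0) (x 2))) (decide (r (x 0) (x 3)))
      (decide (r (x 0) (x 4))) (decide (r (x 1) (x 3)))
      (decide (r (x 1) (x 4))) (decide (r (x 2) (x 4)))
  have sound := arc6_sound hT x hxinj (hcons 0 (by omega)) (hcons 1 (by omega))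
    (hcons 2 (by omega)) (hcons 3 (by omega))
  obtain ⟨w, hwa, hwb, hwc, hwd⟩ := fin5_leftover a b c d hab hac had hbc hbd hcd
  refine ⟨x a, x b, x c, x d, x w, hxmem a, hxmem b, hxmem c, hxmem d, hxmem w,
    fun h => hab (hxinj h), fun h => hac (hxinj h), fun h => had (hxinj h),
    fun h => hwa (hxinj h.symm), fun h => hbc (hxinj h), fun h => hbd (hxinj h),
    fun h => hwb (hxinj h.symm), fun h => hcd (hxinj h), fun h => hwc (hxinj h.symm),
    fun h => hwd (hxinj h.symm), ?_, sound a b g1, sound a c g2, sound b d g3, sound c d g4⟩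
  intro y hy
  rw [← htf] at hy
  obtain ⟨k, hk⟩ := List.mem_iff_get.mp (List.mem_toFinset.mp hy)
  have hyx : y = x ⟨k.val, by omega⟩ := by
    rw [hx, ← hk]
  have := fin5_cover a b c d w ⟨k.val, by omega⟩ hab hac had
    (Ne.symm hwa) hbc hbd (Ne.symm hwb) hcd (Ne.symm hwc) (Ne.symm hwd)
  rcases this with h | h | h | h | h <;> rw [hyx, h] <;> tauto
end Lemma5

section MainR
variable {V : Type*} [DecidableEq V] {r : V → V → Prop}

lemma mainR (hT : IsTournament r) : ∀ (n : ℕ) (s : Finset V), s.card = n + 5 →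
    ∃ a b c d w, a ∈ s ∧ b ∈ s ∧ c ∈ s ∧ d ∈ s ∧ w ∈ s ∧
      a ≠ b ∧ a ≠ c ∧ a ≠ d ∧ a ≠ w ∧ b ≠ c ∧ b ≠ d ∧ b ≠ w ∧
      c ≠ d ∧ c ≠ w ∧ d ≠ w ∧
      r a b ∧ r a c ∧ r b d ∧ r c d ∧
      ∀ y ∈ s \ {a, b, c, w}, reachIn r (s \ {a, b, c, w}) d y := by
  intro n
  induction n with
  | zero =>
    intro s hs
    obtain ⟨a, b, c, d, w, ha, hb, hc, hd, hw, hab, hac, had, haw, hbc, hbd, hbw,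
      hcd, hcw, hdw, hcover, r1, r2, r3, r4⟩ := lemma5 hT hs
    refine ⟨a, b, c, d, w, ha, hb, hc, hd, hw, hab, hac, had, haw, hbc, hbd, hbw,
      hcd, hcw, hdw, r1, r2, r3, r4, ?_⟩
    intro y hy
    obtain ⟨hys, hyn⟩ := Finset.mem_sdiff.mp hy
    simp only [Finset.mem_insert, Finset.mem_singleton] at hyn
    push_neg at hyn
    rcases hcover y hys with rfl | rfl | rfl | rfl | rfl
    · exact absurd rfl hyn.1
    · exact absurd rfl hyn.2.1
    · exact absurd rfl hyn.2.2.1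
    · exact Relation.ReflTransGen.refl
    · exact absurd rfl hyn.2.2.2
  | succ n ih =>
    intro s hs
    have hne : s.Nonempty := by rw [← Finset.card_pos, hs]; omega
    obtain ⟨v, hv⟩ := hne
    set s' := s.erase v with hs'def
    have hs'card : s'.card = n + 5 := by
      rw [hs'def, Finset.card_erase_of_mem hv, hs]
      omega
    have hvs' : v ∉ s' := Finset.notMem_erase v s
    have hsub' : s' ⊆ s := Finset.erase_subset v s
    obtain ⟨a, b, c, d, w', ha, hb, hc, hd, hw', hab, hac, had, haw, hbc, hbd, hbw,
      hcd, hcw, hdw, r1, r2, r3, r4, hreach⟩ := ih s' hs'card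
    set U' := s' \ {a, b, c, w'} with hU'def
    have hva : v ≠ a := fun h => hvs' (h ▸ ha)
    have hvb : v ≠ b := fun h => hvs' (h ▸ hb)
    have hvc : v ≠ c := fun h => hvs' (h ▸ hc)
    have hvd : v ≠ d := fun h => hvs' (h ▸ hd)
    have hvw : v ≠ w' := fun h => hvs' (h ▸ hw')
    have hdU' : d ∈ U' := by
      rw [hU'def]
      simp only [Finset.mem_sdiff, Finset.mem_insert, Finset.mem_singleton]
      exact ⟨hd, by push_neg; exact ⟨Ne.symm had, Ne.symm hbd, Ne.symm hcd, hdw⟩⟩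
    have hvU' : v ∉ U' := fun h => hvs' (Finset.mem_sdiff.mp h).1
    have hwU' : w' ∉ U' := by
      rw [hU'def]
      simp only [Finset.mem_sdiff, Finset.mem_insert, Finset.mem_singleton]
      push_neg
      tauto
    have hU'mem : ∀ z ∈ U', z ∈ s ∧ z ≠ v ∧ z ≠ a ∧ z ≠ b ∧ z ≠ c ∧ z ≠ w' := by
      intro z hz
      rw [hU'def] at hz
      simp only [Finset.mem_sdiff, Finset.mem_insert, Finset.mem_singleton] at hz
      push_neg at hz
      obtain ⟨hz1, hz2⟩ := hz
      exact ⟨hsub' hz1, fun h => hvs' (h ▸ hz1), hz2.1, hz2.2.1, hz2.2.2.1, hz2.2.2.2⟩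
    have hU'of : ∀ z, z ∈ s → z ≠ v → z ≠ a → z ≠ b → z ≠ c → z ≠ w' → z ∈ U' := by
      intro z h1 h2 h3 h4 h5 h6
      rw [hU'def]
      simp only [Finset.mem_sdiff, Finset.mem_insert, Finset.mem_singleton, hs'def,
        Finset.mem_erase]
      push_neg
      exact ⟨⟨h2, h1⟩, h3, h4, h5, h6⟩
    by_cases hcase1 : ∃ u ∈ U', r u v
    · -- extend the reachable set by v
      obtain ⟨u, huU, hruv⟩ := hcase1
      refine ⟨a, b, c, d, w', hsub' ha, hsub' hb, hsub' hc, hsub' hd, hsub' hw',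
        hab, hac, had, haw, hbc, hbd, hbw, hcd, hcw, hdw, r1, r2, r3, r4, ?_⟩
      set U := s \ {a, b, c, w'} with hUdef
      have hU'U : U' ⊆ U := by
        intro z hz
        obtain ⟨hz1, _, hz3, hz4, hz5, hz6⟩ := hU'mem z hz
        rw [hUdef]
        simp only [Finset.mem_sdiff, Finset.mem_insert, Finset.mem_singleton]
        push_neg
        exact ⟨hz1, hz3, hz4, hz5, hz6⟩
      have hvU : v ∈ U := by
        rw [hUdef]
        simp only [Finset.mem_sdiff, Finset.mem_insert, Finset.mem_singleton]
        push_neg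
        exact ⟨hv, hva, hvb, hvc, hvw⟩
      intro y hy
      by_cases hyv : y = v
      · subst hyv
        exact reachIn_trans (reachIn_mono hU'U (hreach u huU)) (reachIn_single hvU hruv)
      · have hyU' : y ∈ U' := by
          rw [hUdef] at hy
          simp only [Finset.mem_sdiff, Finset.mem_insert, Finset.mem_singleton] at hy
          push_neg at hy
          exact hU'of y hy.1 hyv hy.2.1 hy.2.2.1 hy.2.2.2.1 hy.2.2.2.2
        exact reachIn_mono hU'U (hreach y hyU')
    by_cases hcase2 : ∃ u ∈ U', r u w'
    · -- use v as the spare vertex, extend by w'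
      obtain ⟨u, huU, hruw⟩ := hcase2
      refine ⟨a, b, c, d, v, hsub' ha, hsub' hb, hsub' hc, hsub' hd, hv,
        hab, hac, had, Ne.symm hva, hbc, hbd, Ne.symm hvb, hcd, Ne.symm hvc,
        Ne.symm hvd, r1, r2, r3, r4, ?_⟩
      set U := s \ {a, b, c, v} with hUdef
      have hU'U : U' ⊆ U := by
        intro z hz
        obtain ⟨hz1, hz2, hz3, hz4, hz5, _⟩ := hU'mem z hz
        rw [hUdef]
        simp only [Finset.mem_sdiff, Finset.mem_insert, Finset.mem_singleton]
        push_neg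
        exact ⟨hz1, hz3, hz4, hz5, hz2⟩
      have hwU : w' ∈ U := by
        rw [hUdef]
        simp only [Finset.mem_sdiff, Finset.mem_insert, Finset.mem_singleton]
        push_neg
        exact ⟨hsub' hw', Ne.symm haw, Ne.symm hbw, Ne.symm hcw, Ne.symm hvw⟩
      intro y hy
      by_cases hyw : y = w'
      · subst hyw
        exact reachIn_trans (reachIn_mono hU'U (hreach u huU)) (reachIn_single hwU hruw)
      · have hyU' : y ∈ U' := by
          rw [hUdef] at hy
          simp only [Finset.mem_sdiff, Finset.mem_insert, Finset.mem_singleton] at hy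
          push_neg at hy
          exact hU'of y hy.1 hy.2.2.2.2 hy.2.1 hy.2.2.1 hy.2.2.2.1 hyw
        exact reachIn_mono hU'U (hreach y hyU')
    -- Case 3 : v and w' dominate U'
    push_neg at hcase1 hcase2
    have hPv : ∀ u ∈ U', r v u := by
      intro u hu
      exact tourn_flip hT ((hU'mem u hu).2.1) (hcase1 u hu)
    have hPw : ∀ u ∈ U', r w' u := by
      intro u hu
      exact tourn_flip hT ((hU'mem u hu).2.2.2.2.2) (hcase2 u hu)
    have rvd : r v d := hPv d hdU'
    have rwd : r w' d := hPw d hdU'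
    -- the reconfiguration helper
    have resolve : ∀ x1 x2 x3 x4 e : V,
        x1 ≠ x2 → x1 ≠ x3 → x1 ≠ x4 → x2 ≠ x3 → x2 ≠ x4 → x3 ≠ x4 →
        x1 ∈ s → x2 ∈ s → x3 ∈ s → x4 ∈ s → e ∈ s →
        r x1 d → r x2 d → r x3 d → r x4 d →
        d ≠ x1 → d ≠ x2 → d ≠ x3 → d ≠ x4 →
        e ≠ x1 → e ≠ x2 → e ≠ x3 → e ≠ x4 → e ≠ d →
        (∀ z, z ∈ s → z ∉ ({x1, x2, x3, x4} : Finset V) → z ≠ e → z ∈ U') →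
        (∀ z, z ∈ U' → z ∉ ({x1, x2, x3, x4} : Finset V)) →
        (∃ u ∈ U', r u e) →
        (∃ A B C D W, A ∈ s ∧ B ∈ s ∧ C ∈ s ∧ D ∈ s ∧ W ∈ s ∧
          A ≠ B ∧ A ≠ C ∧ A ≠ D ∧ A ≠ W ∧ B ≠ C ∧ B ≠ D ∧ B ≠ W ∧
          C ≠ D ∧ C ≠ W ∧ D ≠ W ∧
          r A B ∧ r A C ∧ r B D ∧ r C D ∧
          ∀ y ∈ s \ {A, B, C, W}, reachIn r (s \ {A, B, C, W}) D y) := by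
      intro x1 x2 x3 x4 e h12 h13 h14 h23 h24 h34 hx1 hx2 hx3 hx4 he
        hr1 hr2 hr3 hr4 hd1 hd2 hd3 hd4 he1 he2 he3 he4 hed hclass hnotU ⟨u₀, hu₀, hu₀e⟩
      obtain ⟨q, q1, q2, yy, hset, hq1, hq2, hqy, hq12, hq1y, hq2y, hrq1, hrq2⟩ :=
        helperA hT h12 h13 h14 h23 h24 h34
      have hmem4 : ∀ z, z ∈ ({x1, x2, x3, x4} : Finset V) → z ∈ s ∧ r z d ∧ d ≠ z := by
        intro z hz
        simp only [Finset.mem_insert, Finset.mem_singleton] at hz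
        rcases hz with rfl | rfl | rfl | rfl
        · exact ⟨hx1, hr1, hd1⟩
        · exact ⟨hx2, hr2, hd2⟩
        · exact ⟨hx3, hr3, hd3⟩
        · exact ⟨hx4, hr4, hd4⟩
      have hqmem : q ∈ ({x1, x2, x3, x4} : Finset V) := by
        rw [← hset]; simp
      have hq1mem : q1 ∈ ({x1, x2, x3, x4} : Finset V) := by
        rw [← hset]; simp
      have hq2mem : q2 ∈ ({x1, x2, x3, x4} : Finset V) := by
        rw [← hset]; simp
      have hyymem : yy ∈ ({x1, x2, x3, x4} : Finset V) := by
        rw [← hset]; simp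
      obtain ⟨hqs, _, hdq⟩ := hmem4 q hqmem
      obtain ⟨hq1s, hrq1d, hdq1⟩ := hmem4 q1 hq1mem
      obtain ⟨hq2s, hrq2d, hdq2⟩ := hmem4 q2 hq2mem
      obtain ⟨hyys, _, hdyy⟩ := hmem4 yy hyymem
      refine ⟨q, q1, q2, d, yy, hqs, hq1s, hq2s, hsub' hd, hyys,
        hq1, hq2, Ne.symm hdq, hqy, hq12, Ne.symm hdq1, hq1y, Ne.symm hdq2, hq2y,
        hdyy, hrq1, hrq2, hrq1d, hrq2d, ?_⟩
      set U := s \ {q, q1, q2, yy} with hUdef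
      have hnotin4 : ∀ z : V, z ∉ ({x1, x2, x3, x4} : Finset V) →
          z ∉ ({q, q1, q2, yy} : Finset V) := by
        intro z hz hz2
        rw [hset] at hz2
        exact hz hz2
      have hU'U : U' ⊆ U := by
        intro z hz
        rw [hUdef]
        exact Finset.mem_sdiff.mpr ⟨(hU'mem z hz).1, hnotin4 z (hnotU z hz)⟩
      have heU : e ∈ U := by
        rw [hUdef]
        refine Finset.mem_sdiff.mpr ⟨he, hnotin4 e ?_⟩
        simp only [Finset.mem_insert, Finset.mem_singleton]
        push_neg
        exact ⟨he1, he2, he3, he4⟩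
      intro y hy
      by_cases hye : y = e
      · subst hye
        exact reachIn_trans (reachIn_mono hU'U (hreach u₀ hu₀)) (reachIn_single heU hu₀e)
      · obtain ⟨hys, hyn⟩ := Finset.mem_sdiff.mp hy
        have hyn' : y ∉ ({x1, x2, x3, x4} : Finset V) := by
          rw [← hset]; exact hyn
        exact reachIn_mono hU'U (hreach y (hclass y hys hyn' hye))
    -- now the three sub-cases and the final resolution
    by_cases hPa : ∃ u ∈ U', r u a
    · refine resolve b c v w' a hbc (Ne.symm hvb) hbw (Ne.symm hvc) hcw hvw
        (hsub' hb) (hsub' hc) hv (hsub' hw') (hsub' ha)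
        r3 r4 rvd rwd (Ne.symm hbd) (Ne.symm hcd) (Ne.symm hvd).symm.symm hdw
        hab hac (Ne.symm hva) haw (had) ?_ ?_ hPa
      · intro z hzs hz4 hza
        simp only [Finset.mem_insert, Finset.mem_singleton] at hz4
        push_neg at hz4
        exact hU'of z hzs hz4.2.2.1 hza hz4.1 hz4.2.1 hz4.2.2.2
      · intro z hz
        obtain ⟨_, hzv, _, hzb, hzc, hzw⟩ := hU'mem z hz
        simp only [Finset.mem_insert, Finset.mem_singleton]
        push_neg
        exact ⟨hzb, hzc, hzv, hzw⟩
    push_neg at hPa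
    have hPA : ∀ u ∈ U', r a u := fun u hu =>
      tourn_flip hT ((hU'mem u hu).2.2.1) (hPa u hu)
    have rad : r a d := hPA d hdU'
    by_cases hPb : ∃ u ∈ U', r u b
    · refine resolve a c v w' b hac (Ne.symm hva) haw (Ne.symm hvc) hcw hvw
        (hsub' ha) (hsub' hc) hv (hsub' hw') (hsub' hb)
        rad r4 rvd rwd (Ne.symm had) (Ne.symm hcd) (Ne.symm hvd).symm.symm hdw
        (Ne.symm hab) hbc (Ne.symm hvb) hbw (hbd) ?_ ?_ hPb
      · intro z hzs hz4 hzb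
        simp only [Finset.mem_insert, Finset.mem_singleton] at hz4
        push_neg at hz4
        exact hU'of z hzs hz4.2.2.1 hz4.1 hzb hz4.2.1 hz4.2.2.2
      · intro z hz
        obtain ⟨_, hzv, hza, _, hzc, hzw⟩ := hU'mem z hz
        simp only [Finset.mem_insert, Finset.mem_singleton]
        push_neg
        exact ⟨hza, hzc, hzv, hzw⟩
    push_neg at hPb
    have hPB : ∀ u ∈ U', r b u := fun u hu =>
      tourn_flip hT ((hU'mem u hu).2.2.2.1) (hPb u hu)
    by_cases hPc : ∃ u ∈ U', r u c
    · refine resolve a b v w' c hab (Ne.symm hva) haw (Ne.symm hvb) hbw hvw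
        (hsub' ha) (hsub' hb) hv (hsub' hw') (hsub' hc)
        rad r3 rvd rwd (Ne.symm had) (Ne.symm hbd) (Ne.symm hvd).symm.symm hdw
        (Ne.symm hac) (Ne.symm hbc) (Ne.symm hvc) hcw (hcd) ?_ ?_ hPc
      · intro z hzs hz4 hzc
        simp only [Finset.mem_insert, Finset.mem_singleton] at hz4
        push_neg at hz4
        exact hU'of z hzs hz4.2.2.1 hz4.1 hz4.2.1 hzc hz4.2.2.2
      · intro z hz
        obtain ⟨_, hzv, hza, hzb, _, hzw⟩ := hU'mem z hz
        simp only [Finset.mem_insert, Finset.mem_singleton]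
        push_neg
        exact ⟨hza, hzb, hzv, hzw⟩
    push_neg at hPc
    have hPC : ∀ u ∈ U', r c u := fun u hu =>
      tourn_flip hT ((hU'mem u hu).2.2.2.2.1) (hPc u hu)
    -- final resolution : X = {v,a,b,c,w'} dominates U'
    set X : Finset V := {v, a, b, c, w'} with hXdef
    have hXcard : X.card = 5 := by
      rw [hXdef]
      rw [Finset.card_insert_of_notMem (by
        simp only [Finset.mem_insert, Finset.mem_singleton]; push_neg
        exact ⟨hva, hvb, hvc, hvw⟩)]
      rw [Finset.card_insert_of_notMem (by
        simp only [Finset.mem_insert, Finset.mem_singleton]; push_neg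
        exact ⟨hab, hac, haw⟩)]
      rw [Finset.card_insert_of_notMem (by
        simp only [Finset.mem_insert, Finset.mem_singleton]; push_neg
        exact ⟨hbc, hbw⟩)]
      rw [Finset.card_insert_of_notMem (by
        simp only [Finset.mem_singleton]
        exact hcw)]
      rw [Finset.card_singleton]
    obtain ⟨A, B, C, D, W, hA, hB, hC, hD, hW, hAB, hAC, hAD, hAW, hBC, hBD, hBW,
      hCD, hCW, hDW, hXcover, g1, g2, g3, g4⟩ := lemma5 hT hXcard
    have hXsub : ∀ z ∈ X, z ∈ s := by
      intro z hz
      rw [hXdef] at hz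
      simp only [Finset.mem_insert, Finset.mem_singleton] at hz
      rcases hz with rfl | rfl | rfl | rfl | rfl
      · exact hv
      · exact hsub' ha
      · exact hsub' hb
      · exact hsub' hc
      · exact hsub' hw'
    have hXdom : ∀ z ∈ X, ∀ u ∈ U', r z u := by
      intro z hz
      rw [hXdef] at hz
      simp only [Finset.mem_insert, Finset.mem_singleton] at hz
      rcases hz with rfl | rfl | rfl | rfl | rfl
      · exact hPv
      · exact hPA
      · exact hPB
      · exact hPC
      · exact hPw
    have hXnotU' : ∀ z ∈ U', z ∉ X := by
      intro z hz hzX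
      exact (hT.1 z) (hXdom z hzX z hz)
    refine ⟨A, B, C, D, W, hXsub A hA, hXsub B hB, hXsub C hC, hXsub D hD, hXsub W hW,
      hAB, hAC, hAD, hAW, hBC, hBD, hBW, hCD, hCW, hDW, g1, g2, g3, g4, ?_⟩
    set U := s \ {A, B, C, W} with hUdef
    have hU'U : U' ⊆ U := by
      intro z hz
      rw [hUdef]
      refine Finset.mem_sdiff.mpr ⟨(hU'mem z hz).1, ?_⟩
      intro hz4
      apply hXnotU' z hz
      simp only [Finset.mem_insert, Finset.mem_singleton] at hz4
      rcases hz4 with rfl | rfl | rfl | rfl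
      · exact hA
      · exact hB
      · exact hC
      · exact hW
    intro y hy
    by_cases hyD : y = D
    · subst hyD; exact Relation.ReflTransGen.refl
    · obtain ⟨hys, hyn⟩ := Finset.mem_sdiff.mp hy
      have hyU' : y ∈ U' := by
        by_cases hyX : y ∈ X
        · exfalso
          rcases hXcover y hyX with rfl | rfl | rfl | rfl | rfl
          · exact hyn (by simp)
          · exact hyn (by simp)
          · exact hyn (by simp)
          · exact hyD rfl
          · exact hyn (by simp)
        · rw [hXdef] at hyX
          simp only [Finset.mem_insert, Finset.mem_singleton] at hyX
          push_neg at hyX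
          exact hU'of y hys hyX.1 hyX.2.1 hyX.2.2.1 hyX.2.2.2.1 hyX.2.2.2.2
      have hyU : y ∈ U := hU'U hyU'
      exact reachIn_single hyU (hXdom D hD y hyU')
end MainR

section Final

lemma upper {V : Type} [Fintype V] (r : V → V → Prop) (hT : IsTournament r)
    (m : ℕ) (hcard : Fintype.card V = m + 5) : Contains r (cpArc m) := by
  classical
  have huniv : (Finset.univ : Finset V).card = m + 5 := by
    rw [Finset.card_univ, hcard]
  obtain ⟨a, b, c, d, w, _, _, _, _, _, hab, hac, had, haw, hbc, hbd, hbw,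
    hcd, hcw, hdw, r1, r2, r3, r4, hreach⟩ := mainR hT m Finset.univ huniv
  set U : Finset V := Finset.univ \ {a, b, c, w} with hUdef
  have hdU : d ∈ U := by
    rw [hUdef]
    simp only [Finset.mem_sdiff, Finset.mem_univ, true_and, Finset.mem_insert,
      Finset.mem_singleton]
    push_neg
    exact ⟨Ne.symm had, Ne.symm hbd, Ne.symm hcd, hdw⟩
  have haU : a ∉ U := by simp [hUdef]
  have hbU : b ∉ U := by simp [hUdef]
  have hcU : c ∉ U := by simp [hUdef]
  have hUcard : U.card = m + 1 := by
    rw [hUdef, Finset.card_sdiff_of_subset (by intro z _; exact Finset.mem_univ z),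
      Finset.card_univ, hcard]
    have : ({a, b, c, w} : Finset V).card = 4 := by
      rw [Finset.card_insert_of_notMem (by
        simp only [Finset.mem_insert, Finset.mem_singleton]; push_neg
        exact ⟨hab, hac, haw⟩)]
      rw [Finset.card_insert_of_notMem (by
        simp only [Finset.mem_insert, Finset.mem_singleton]; push_neg
        exact ⟨hbc, hbw⟩)]
      rw [Finset.card_insert_of_notMem (by simp only [Finset.mem_singleton]; exact hcw)]
      rw [Finset.card_singleton]
    rw [this]
    omega
  obtain ⟨l, hch, hnd, htf, hhd⟩ :=
    ham_from_reaching hT (m + 1) U hUcard d hdU (fun y hy => hreach y hy)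
  have hlen : l.length = m + 1 := by
    have := List.toFinset_card_of_nodup hnd
    rw [htf, hUcard] at this; omega
  have hidx : ∀ k : Fin (m + 4), k.val - 3 < l.length := fun k => by
    have := k.isLt; omega
  set φ : Fin (m + 4) → V := fun k =>
    if k.val = 0 then a else if k.val = 1 then b else if k.val = 2 then c
    else l.get ⟨k.val - 3, hidx k⟩ with hφ
  have hget0 : l.get ⟨0, by omega⟩ = d := by
    cases l with
    | nil => simp at hlen
    | cons x t =>
      have : x = d := by simpa using hhd
      exact this
  have hgetmem : ∀ (i : ℕ) (h : i < l.length), l.get ⟨i, h⟩ ∈ U := by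
    intro i h
    rw [← htf]
    exact List.mem_toFinset.mpr (List.get_mem l _)
  have hgetinj : ∀ (i j : ℕ) (hi : i < l.length) (hj : j < l.length),
      l.get ⟨i, hi⟩ = l.get ⟨j, hj⟩ → i = j := by
    intro i j hi hj h
    have := (List.nodup_iff_injective_get.mp hnd) h
    exact Fin.mk.injEq _ _ _ _ ▸ (by injection this)
  have hchain : ∀ (i : ℕ) (h : i + 1 < l.length),
      r (l.get ⟨i, by omega⟩) (l.get ⟨i + 1, h⟩) := by
    intro i h
    exact List.isChain_iff_getElem.mp hch i (by omega)
  refine ⟨φ, ?_, ?_⟩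
  · -- injectivity
    intro j k h
    rw [hφ] at h
    simp only at h
    split_ifs at h with hj0 hk0 hk1 hk2 hj1 hk0 hk1 hk2 hj2 hk0 hk1 hk2 hk0 hk1 hk2 <;>
      first
        | (exact Fin.ext (by omega))
        | (exact absurd h hab)
        | (exact absurd h.symm hab)
        | (exact absurd h hac)
        | (exact absurd h.symm hac)
        | (exact absurd h hbc)
        | (exact absurd h.symm hbc)
        | (exfalso; apply haU; rw [h]; exact hgetmem _ _)
        | (exfalso; apply hbU; rw [h]; exact hgetmem _ _)
        | (exfalso; apply hcU; rw [h]; exact hgetmem _ _)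
        | (exfalso; apply haU; rw [← h]; exact hgetmem _ _)
        | (exfalso; apply hbU; rw [← h]; exact hgetmem _ _)
        | (exfalso; apply hcU; rw [← h]; exact hgetmem _ _)
        | (exact Fin.ext (by have := hgetinj _ _ _ _ h; omega))
  · -- arcs
    intro u v harc
    have hφval : ∀ (k : Fin (m + 4)), 3 ≤ k.val → φ k = l.get ⟨k.val - 3, hidx k⟩ := by
      intro k hk
      rw [hφ]
      simp only
      rw [if_neg (by omega), if_neg (by omega), if_neg (by omega)]
    rcases harc with ⟨hu, hv⟩ | ⟨hu, hv⟩ | ⟨hu, hv⟩ | ⟨hu, hv⟩ | ⟨hu, hv⟩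
    · -- (0,1) : a → b
      have h1 : φ u = a := by rw [hφ]; simp only; rw [if_pos hu]
      have h2 : φ v = b := by rw [hφ]; simp only; rw [if_neg (by omega), if_pos hv]
      rw [h1, h2]; exact r1
    · have h1 : φ u = a := by rw [hφ]; simp only; rw [if_pos hu]
      have h2 : φ v = c := by
        rw [hφ]; simp only; rw [if_neg (by omega), if_neg (by omega), if_pos hv]
      rw [h1, h2]; exact r2
    · have h1 : φ u = b := by rw [hφ]; simp only; rw [if_neg (by omega), if_pos hu]
      have h2 : φ v = d := by
        rw [hφval v (by omega)]
        have : (⟨v.val - 3, hidx v⟩ : Fin l.length) = ⟨0, by omega⟩ :=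
          Fin.ext (by simp; omega)
        rw [this, hget0]
      rw [h1, h2]; exact r3
    · have h1 : φ u = c := by
        rw [hφ]; simp only; rw [if_neg (by omega), if_neg (by omega), if_pos hu]
      have h2 : φ v = d := by
        rw [hφval v (by omega)]
        have : (⟨v.val - 3, hidx v⟩ : Fin l.length) = ⟨0, by omega⟩ :=
          Fin.ext (by simp; omega)
        rw [this, hget0]
      rw [h1, h2]; exact r4
    · -- path arcs
      have hub : u.val - 3 + 1 < l.length := by
        have := v.isLt; omega
      have h5 := hchain (u.val - 3) hub
      have h1 : φ u = l.get ⟨u.val - 3, by omega⟩ := hφval u hu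
      have h2 : φ v = l.get ⟨u.val - 3 + 1, hub⟩ := by
        rw [hφval v (by omega)]
        congr 1
        exact Fin.ext (by simp; omega)
      rw [h1, h2]; exact h5

end Final


/-- Theorem 3: for `n ≥ 4`, `→r(CP(2,2; n-4)) = n + 1`. -/
theorem orientedRamsey_cp (n : ℕ) (hn : 4 ≤ n) :
    (∀ (V : Type) (_ : Fintype V) (r : V → V → Prop), IsTournament r →
        Fintype.card V = n + 1 → Contains r (cpArc (n - 4))) ∧
    (∃ (V : Type) (_ : Fintype V) (r : V → V → Prop), IsTournament r ∧
        Fintype.card V = n ∧ ¬ Contains r (cpArc (n - 4))) := by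
  obtain ⟨m, rfl⟩ : ∃ m, n = m + 4 := ⟨n - 4, by omega⟩
  have hm : m + 4 - 4 = m := by omega
  constructor
  · intro V instV r hT hcard
    letI := instV
    rw [hm]
    exact upper r hT m (by omega)
  · refine ⟨Fin (m + 4), inferInstance, lowArc m, lowArc_tournament m, by simp, ?_⟩
    rw [hm]
    exact low_no_cp m

-- #print axioms check
end

section
/- For every integer n ≥ 4, every tournament on n+1 vertices contains a copy of CP(2,2;n−4). -/
def GoodFun {V : Type*} (r : V → V → Prop) (k : ℕ) (w : ℕ → V) : Prop :=
  (∀ i j, i < k → j < k → w i = w j → i = j) ∧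
  (∀ i, i + 1 < k → r (w i) (w (i + 1))) ∧ r (w 0) (w 2) ∧ r (w 1) (w 3)

lemma mk4 {V : Type*} {r : V → V → Prop} {a b c d : V}
    (hab : a ≠ b) (hac : a ≠ c) (had : a ≠ d) (hbc : b ≠ c) (hbd : b ≠ d) (hcd : c ≠ d)
    (x1 : r a b) (x2 : r b c) (x3 : r c d) (x4 : r a c) (x5 : r b d) :
    ∃ w : ℕ → V, GoodFun r 4 w := by
  refine ⟨fun i => if i = 0 then a else if i = 1 then b else if i = 2 then c else d,
    ?_, ?_, x4, x5⟩
  · intro i j hi hj hij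
    interval_cases i <;> interval_cases j <;>
      first
      | rfl
      | exact absurd hij hab | exact absurd hij.symm hab
      | exact absurd hij hac | exact absurd hij.symm hac
      | exact absurd hij had | exact absurd hij.symm had
      | exact absurd hij hbc | exact absurd hij.symm hbc
      | exact absurd hij hbd | exact absurd hij.symm hbd
      | exact absurd hij hcd | exact absurd hij.symm hcd
  · intro m hm
    have hm3 : m < 3 := by omega
    interval_cases m
    · exact x1
    · exact x2
    · exact x3

lemma ins_chain {V : Type*} {r : V → V → Prop} (ht : IsTournament r) (a : V) :
    ∀ l : List V, l.Chain' r → a ∉ l →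
      ∃ m : List V, m.Chain' r ∧ m.Perm (a :: l) ∧
        (∀ x, m.head? = some x → x = a ∨ l.head? = some x) := by
  intro l
  induction l with
  | nil => intro _ _; exact ⟨[a], List.isChain_singleton a, List.Perm.refl _, by simp⟩
  | cons b t ih =>
    intro hl ha
    by_cases hab : r a b
    · exact ⟨a :: b :: t, List.isChain_cons_cons.2 ⟨hab, hl⟩, List.Perm.refl _, by simp⟩
    · have hne : b ≠ a := fun e => by simp [e] at ha
      have hba : r b a := (ht.2 b a hne).mpr hab
      obtain ⟨m, hmc, hmp, hmh⟩ := ih hl.tail (fun h => ha (List.mem_cons_of_mem _ h))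
      refine ⟨b :: m, ?_, ?_, ?_⟩
      · refine List.isChain_cons.2 ⟨?_, hmc⟩
        intro x hx
        rcases hmh x hx with rfl | hx2
        · exact hba
        · exact (List.isChain_cons.1 hl).1 x hx2
      · exact (hmp.cons b).trans (List.Perm.swap a b t)
      · intro x hx; simp at hx; subst hx; right; rfl

lemma sort_chain {V : Type*} {r : V → V → Prop} (ht : IsTournament r) :
    ∀ l : List V, l.Nodup → ∃ m : List V, m.Chain' r ∧ m.Perm l := by
  intro l
  induction l with
  | nil => intro _; exact ⟨[], List.isChain_nil, List.Perm.refl _⟩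
  | cons a t ih =>
    intro hnd
    obtain ⟨m, hmc, hmp⟩ := ih hnd.of_cons
    have ha : a ∉ m := fun h => (List.nodup_cons.1 hnd).1 (hmp.mem_iff.1 h)
    obtain ⟨m', hc, hp, _⟩ := ins_chain ht a m hmc ha
    exact ⟨m', hc, hp.trans (hmp.cons a)⟩

lemma base_case {V : Type*} [Fintype V] {r : V → V → Prop} (ht : IsTournament r)
    (hcard : 5 ≤ Fintype.card V) : ∃ w : ℕ → V, GoodFun r 4 w := by
  classical
  have tot : ∀ x y : V, x ≠ y → r x y ∨ r y x := by
    intro x y hxy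
    by_cases h : r x y
    · exact Or.inl h
    · exact Or.inr ((ht.2 y x hxy.symm).mpr h)
  obtain ⟨t, -, htc⟩ := Finset.exists_subset_card_eq (s := (Finset.univ : Finset V)) (n := 5)
    (by simpa using hcard)
  obtain ⟨m, hmc, hmp⟩ := sort_chain ht t.toList t.nodup_toList
  have hnd : m.Nodup := hmp.nodup_iff.2 t.nodup_toList
  have hlen : m.length = 5 := by
    rw [hmp.length_eq, Finset.length_toList, htc]
  match m, hlen with
  | [p0, p1, p2, p3, p4], _ =>
  simp only [List.Chain', List.isChain_cons_cons, List.isChain_singleton, and_true] at hmc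
  obtain ⟨h01, h12, h23, h34⟩ := hmc
  simp only [List.nodup_cons, List.mem_cons, List.mem_singleton, List.not_mem_nil,
    not_or, or_false] at hnd
  obtain ⟨⟨hd01, hd02, hd03, hd04⟩, ⟨hd12, hd13, hd14⟩, ⟨hd23, hd24⟩, hd34, -⟩ := hnd
  rcases tot p0 p2 hd02 with h02 | h02 <;>
  rcases tot p0 p3 hd03 with h03 | h03 <;>
  rcases tot p0 p4 hd04 with h04 | h04 <;>
  rcases tot p1 p3 hd13 with h13 | h13 <;>
  rcases tot p1 p4 hd14 with h14 | h14 <;>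
  rcases tot p2 p4 hd24 with h24 | h24 <;>
      first
        | exact mk4 hd23 (Ne.symm hd02) (Ne.symm hd12) (Ne.symm hd03) (Ne.symm hd13) hd01 h23 h03 h01 h02 h13
        | exact mk4 hd14 hd12 (Ne.symm hd01) (Ne.symm hd24) (Ne.symm hd04) (Ne.symm hd02) h14 h24 h02 h12 h04
        | exact mk4 hd12 hd14 (Ne.symm hd01) hd24 (Ne.symm hd02) (Ne.symm hd04) h12 h24 h04 h14 h02
        | exact mk4 hd12 hd13 (Ne.symm hd01) hd23 (Ne.symm hd02) (Ne.symm hd03) h12 h23 h03 h13 h02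
        | exact mk4 hd04 hd01 hd02 (Ne.symm hd14) (Ne.symm hd24) hd12 h04 h14 h12 h01 h24
        | exact mk4 (Ne.symm hd02) hd24 (Ne.symm hd12) hd04 hd01 (Ne.symm hd14) h02 h04 h14 h24 h01
        | exact mk4 hd01 hd04 hd02 hd14 hd12 (Ne.symm hd24) h01 h14 h24 h04 h12
        | exact mk4 (Ne.symm hd02) hd23 (Ne.symm hd12) hd03 hd01 (Ne.symm hd13) h02 h03 h13 h23 h01
        | exact mk4 hd03 hd01 hd04 (Ne.symm hd13) hd34 hd14 h03 h13 h14 h01 h34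
        | exact mk4 (Ne.symm hd04) (Ne.symm hd14) (Ne.symm hd34) hd01 hd03 hd13 h04 h01 h13 h14 h03
        | exact mk4 hd12 hd13 hd14 hd23 hd24 hd34 h12 h23 h34 h13 h24
        | exact mk4 hd01 hd03 hd04 hd13 hd14 hd34 h01 h13 h34 h03 h14
        | exact mk4 hd03 hd04 hd01 hd34 (Ne.symm hd13) (Ne.symm hd14) h03 h34 h14 h04 h13
        | exact mk4 (Ne.symm hd03) (Ne.symm hd13) (Ne.symm hd23) hd01 hd02 hd12 h03 h01 h12 h13 h02
        | exact mk4 hd23 hd24 (Ne.symm hd02) hd34 (Ne.symm hd03) (Ne.symm hd04) h23 h34 h04 h24 h03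
        | exact mk4 hd01 hd02 hd04 hd12 hd14 hd24 h01 h12 h24 h02 h14
        | exact mk4 hd01 hd02 hd03 hd12 hd13 hd23 h01 h12 h23 h02 h13
        | exact mk4 hd23 hd24 (Ne.symm hd12) hd34 (Ne.symm hd13) (Ne.symm hd14) h23 h34 h14 h24 h13
        | exact mk4 hd34 (Ne.symm hd13) (Ne.symm hd23) (Ne.symm hd14) (Ne.symm hd24) hd12 h34 h14 h12 h13 h24
        | exact mk4 hd02 hd03 hd04 hd23 hd24 hd34 h02 h23 h34 h03 h24

def frontFun {V : Type*} (x0 x1 x2 x3 : V) (w : ℕ → V) : ℕ → V := fun j =>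
  if j = 0 then x0 else if j = 1 then x1 else if j = 2 then x2 else if j = 3 then x3
  else w (j - 1)

lemma frontFun_ge {V : Type*} (x0 x1 x2 x3 : V) (w : ℕ → V) (m : ℕ) (hm : 4 ≤ m) :
    frontFun x0 x1 x2 x3 w m = w (m - 1) := by
  unfold frontFun
  rw [if_neg (by omega), if_neg (by omega), if_neg (by omega), if_neg (by omega)]

lemma good_front {V : Type*} {r : V → V → Prop} {k : ℕ} (hk : 4 ≤ k) {w : ℕ → V}
    (hw : GoodFun r k w) (x0 x1 x2 x3 : V)
    (d01 : x0 ≠ x1) (d02 : x0 ≠ x2) (d03 : x0 ≠ x3)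
    (d12 : x1 ≠ x2) (d13 : x1 ≠ x3) (d23 : x2 ≠ x3)
    (hxw : ∀ j, 3 ≤ j → j < k → x0 ≠ w j ∧ x1 ≠ w j ∧ x2 ≠ w j ∧ x3 ≠ w j)
    (a01 : r x0 x1) (a12 : r x1 x2) (a23 : r x2 x3) (a3w : r x3 (w 3))
    (c02 : r x0 x2) (c13 : r x1 x3) :
    GoodFun r (k + 1) (frontFun x0 x1 x2 x3 w) := by
  have F0 : frontFun x0 x1 x2 x3 w 0 = x0 := rfl
  have F1 : frontFun x0 x1 x2 x3 w 1 = x1 := rfl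
  have F2 : frontFun x0 x1 x2 x3 w 2 = x2 := rfl
  have F3 : frontFun x0 x1 x2 x3 w 3 = x3 := rfl
  refine ⟨?_, ?_, c02, c13⟩
  · intro i j hi hj hij
    by_cases hi4 : 4 ≤ i <;> by_cases hj4 : 4 ≤ j
    · rw [frontFun_ge _ _ _ _ _ _ hi4, frontFun_ge _ _ _ _ _ _ hj4] at hij
      have := hw.1 _ _ (by omega) (by omega) hij
      omega
    · rw [frontFun_ge _ _ _ _ _ _ hi4] at hij
      interval_cases j <;>
        rw [show w (i-1) = w (i-1) from rfl] at hij <;>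
        first
        | exact absurd hij.symm ((hxw (i-1) (by omega) (by omega)).1)
        | exact absurd hij.symm ((hxw (i-1) (by omega) (by omega)).2.1)
        | exact absurd hij.symm ((hxw (i-1) (by omega) (by omega)).2.2.1)
        | exact absurd hij.symm ((hxw (i-1) (by omega) (by omega)).2.2.2)
    · rw [frontFun_ge _ _ _ _ _ _ hj4] at hij
      interval_cases i <;>
        first
        | exact absurd hij ((hxw (j-1) (by omega) (by omega)).1)
        | exact absurd hij ((hxw (j-1) (by omega) (by omega)).2.1)
        | exact absurd hij ((hxw (j-1) (by omega) (by omega)).2.2.1)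
        | exact absurd hij ((hxw (j-1) (by omega) (by omega)).2.2.2)
    · interval_cases i <;> interval_cases j <;>
        first
        | rfl
        | exact absurd hij d01 | exact absurd hij.symm d01
        | exact absurd hij d02 | exact absurd hij.symm d02
        | exact absurd hij d03 | exact absurd hij.symm d03
        | exact absurd hij d12 | exact absurd hij.symm d12
        | exact absurd hij d13 | exact absurd hij.symm d13
        | exact absurd hij d23 | exact absurd hij.symm d23
  · intro m hm
    by_cases h4 : 4 ≤ m
    · rw [frontFun_ge _ _ _ _ _ _ h4, frontFun_ge _ _ _ _ _ (m+1) (by omega)]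
      have e : m + 1 - 1 = m - 1 + 1 := by omega
      rw [e]
      exact hw.2.1 (m - 1) (by omega)
    · interval_cases m
      · exact a01
      · exact a12
      · exact a23
      · rw [frontFun_ge _ _ _ _ _ 4 (by omega)]
        exact a3w

def insFun {V : Type*} (w : ℕ → V) (v : V) (i : ℕ) : ℕ → V := fun j =>
  if j ≤ i then w j else if j = i + 1 then v else w (j - 1)

lemma good_insert {V : Type*} {r : V → V → Prop} {k : ℕ} (hk : 4 ≤ k) {w : ℕ → V}
    (hw : GoodFun r k w) {v : V} {i : ℕ}
    (hvw : ∀ j, j < k → w j ≠ v) (h3 : 3 ≤ i) (hik : i < k)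
    (h1 : r (w i) v) (h2 : i = k - 1 ∨ r v (w (i + 1))) :
    GoodFun r (k + 1) (insFun w v i) := by
  have Ele : ∀ j, j ≤ i → insFun w v i j = w j := fun j hj => if_pos hj
  have Eeq : insFun w v i (i + 1) = v := by
    unfold insFun; rw [if_neg (by omega), if_pos rfl]
  have Egt : ∀ j, i + 2 ≤ j → insFun w v i j = w (j - 1) := fun j hj => by
    unfold insFun; rw [if_neg (by omega), if_neg (by omega)]
  refine ⟨?_, ?_, ?_, ?_⟩
  · intro p q hp hq hpq
    by_cases hp1 : p ≤ i <;> by_cases hq1 : q ≤ i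
    · rw [Ele p hp1, Ele q hq1] at hpq
      exact hw.1 _ _ (by omega) (by omega) hpq
    · by_cases hq2 : q = i + 1
      · subst hq2; rw [Ele p hp1, Eeq] at hpq
        exact absurd hpq (hvw p (by omega))
      · rw [Ele p hp1, Egt q (by omega)] at hpq
        have := hw.1 _ _ (by omega) (by omega) hpq
        omega
    · by_cases hp2 : p = i + 1
      · subst hp2; rw [Eeq, Ele q hq1] at hpq
        exact absurd hpq.symm (hvw q (by omega))
      · rw [Egt p (by omega), Ele q hq1] at hpq
        have := hw.1 _ _ (by omega) (by omega) hpq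
        omega
    · by_cases hp2 : p = i + 1 <;> by_cases hq2 : q = i + 1
      · omega
      · subst hp2; rw [Eeq, Egt q (by omega)] at hpq
        exact absurd hpq.symm (hvw (q - 1) (by omega))
      · subst hq2; rw [Egt p (by omega), Eeq] at hpq
        exact absurd hpq (hvw (p - 1) (by omega))
      · rw [Egt p (by omega), Egt q (by omega)] at hpq
        have := hw.1 _ _ (by omega) (by omega) hpq
        omega
  · intro m hm
    by_cases hA : m + 1 ≤ i
    · rw [Ele m (by omega), Ele (m + 1) hA]
      exact hw.2.1 m (by omega)
    · by_cases hB : m ≤ i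
      · have hmi : m = i := by omega
        subst hmi
        rw [Ele m le_rfl, Eeq]
        exact h1
      · by_cases hC : m = i + 1
        · subst hC
          rw [Eeq, Egt (i + 1 + 1) (by omega)]
          rcases h2 with h2 | h2
          · exact absurd h2 (by omega)
          · have e : i + 1 + 1 - 1 = i + 1 := by omega
            rw [e]; exact h2
        · rw [Egt m (by omega), Egt (m + 1) (by omega)]
          have e : m + 1 - 1 = m - 1 + 1 := by omega
          rw [e]
          exact hw.2.1 (m - 1) (by omega)
  · rw [Ele 0 (by omega), Ele 2 (by omega)]; exact hw.2.2.1
  · rw [Ele 1 (by omega), Ele 3 (by omega)]; exact hw.2.2.2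

lemma ensureB {V : Type*} {r : V → V → Prop} (ht : IsTournament r) {k : ℕ} (hk : 4 ≤ k)
    {w : ℕ → V} (hw : GoodFun r k w) (v : V) (hv : ∀ j, j < k → w j ≠ v) :
    (∃ w', GoodFun r (k + 1) w') ∨ ∀ j, 3 ≤ j → j < k → r v (w j) := by
  by_cases hall : ∀ j, 3 ≤ j → j < k → r v (w j)
  · exact Or.inr hall
  · left
    push_neg at hall
    obtain ⟨j0, h3, hjk, hnr⟩ := hall
    have key : ∀ d j, 3 ≤ j → j < k → ¬ r v (w j) → k - 1 - j ≤ d →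
        ∃ w', GoodFun r (k + 1) w' := by
      intro d
      induction d with
      | zero =>
        intro j h3 hjk hnr hd
        have h1 : r (w j) v := (ht.2 (w j) v (hv j hjk)).mpr hnr
        exact ⟨_, good_insert hk hw hv h3 hjk h1 (Or.inl (by omega))⟩
      | succ d ih =>
        intro j h3 hjk hnr hd
        by_cases hj : j = k - 1
        · have h1 : r (w j) v := (ht.2 (w j) v (hv j hjk)).mpr hnr
          exact ⟨_, good_insert hk hw hv h3 hjk h1 (Or.inl hj)⟩
        · by_cases hnx : r v (w (j + 1))
          · have h1 : r (w j) v := (ht.2 (w j) v (hv j hjk)).mpr hnr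
            exact ⟨_, good_insert hk hw hv h3 hjk h1 (Or.inr hnx)⟩
          · exact ih (j + 1) (by omega) (by omega) hnx (by omega)
    exact key (k - 1 - j0) j0 h3 hjk hnr le_rfl

lemma resolve {V : Type*} {r : V → V → Prop} (ht : IsTournament r) {k : ℕ} (hk : 4 ≤ k)
    {w : ℕ → V} (hw : GoodFun r k w) (v : V) (hv : ∀ j, j < k → w j ≠ v)
    (hB : ∀ j, 3 ≤ j → j < k → r v (w j)) :
    (∃ w', GoodFun r (k + 1) w') ∨
      (r v (w 0) ∧ r (w 1) v ∧ r v (w 2)) ∨ (r (w 0) v ∧ r v (w 1) ∧ r (w 2) v) := by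
  have tot : ∀ x y : V, x ≠ y → r x y ∨ r y x := by
    intro x y hxy
    by_cases h : r x y
    · exact Or.inl h
    · exact Or.inr ((ht.2 y x hxy.symm).mpr h)
  have wne : ∀ p q : ℕ, p < k → q < k → p ≠ q → w p ≠ w q :=
    fun p q hp hq hpq e => hpq (hw.1 p q hp hq e)
  have ch01 : r (w 0) (w 1) := hw.2.1 0 (by omega)
  have ch12 : r (w 1) (w 2) := hw.2.1 1 (by omega)
  have ch23 : r (w 2) (w 3) := hw.2.1 2 (by omega)
  have c02 : r (w 0) (w 2) := hw.2.2.1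
  have c13 : r (w 1) (w 3) := hw.2.2.2
  have hvne : ∀ j, j < k → v ≠ w j := fun j hj => (hv j hj).symm
  have hxwv : ∀ a b c : ℕ, a < 3 → b < 3 → c < 3 → a ≠ b → a ≠ c → b ≠ c →
      ∀ j, 3 ≤ j → j < k → v ≠ w j ∧ w a ≠ w j ∧ w b ≠ w j ∧ w c ≠ w j :=
    fun a b c ha hb hc _ _ _ j h3 hj =>
      ⟨hvne j hj, wne a j (by omega) hj (by omega), wne b j (by omega) hj (by omega),
        wne c j (by omega) hj (by omega)⟩
  rcases tot v (w 0) (hvne 0 (by omega)) with h0 | h0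
  · rcases tot v (w 1) (hvne 1 (by omega)) with h1 | h1
    · -- F4 : (v, w0, w1, w2)
      refine Or.inl ⟨_, good_front hk hw v (w 0) (w 1) (w 2)
        (hvne 0 (by omega)) (hvne 1 (by omega)) (hvne 2 (by omega))
        (wne 0 1 (by omega) (by omega) (by omega)) (wne 0 2 (by omega) (by omega) (by omega))
        (wne 1 2 (by omega) (by omega) (by omega))
        (fun j h3 hj => ⟨hvne j hj, wne 0 j (by omega) hj (by omega),
          wne 1 j (by omega) hj (by omega), wne 2 j (by omega) hj (by omega)⟩)
        h0 ch01 ch12 ch23 h1 c02⟩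
    · rcases tot v (w 2) (hvne 2 (by omega)) with h2 | h2
      · -- P1
        exact Or.inr (Or.inl ⟨h0, h1, h2⟩)
      · -- F3 : (w0, w1, w2, v)
        refine Or.inl ⟨_, good_front hk hw (w 0) (w 1) (w 2) v
          (wne 0 1 (by omega) (by omega) (by omega)) (wne 0 2 (by omega) (by omega) (by omega))
          (hv 0 (by omega)) (wne 1 2 (by omega) (by omega) (by omega)) (hv 1 (by omega))
          (hv 2 (by omega))
          (fun j h3 hj => ⟨wne 0 j (by omega) hj (by omega), wne 1 j (by omega) hj (by omega),
            wne 2 j (by omega) hj (by omega), hvne j hj⟩)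
          ch01 ch12 h2 (hB 3 (by omega) (by omega)) c02 h1⟩
  · rcases tot v (w 1) (hvne 1 (by omega)) with h1 | h1
    · rcases tot v (w 2) (hvne 2 (by omega)) with h2 | h2
      · -- F1 : (w0, v, w1, w2)
        refine Or.inl ⟨_, good_front hk hw (w 0) v (w 1) (w 2)
          (hv 0 (by omega)) (wne 0 1 (by omega) (by omega) (by omega))
          (wne 0 2 (by omega) (by omega) (by omega)) (hvne 1 (by omega)) (hvne 2 (by omega))
          (wne 1 2 (by omega) (by omega) (by omega))
          (fun j h3 hj => ⟨wne 0 j (by omega) hj (by omega), hvne j hj,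
            wne 1 j (by omega) hj (by omega), wne 2 j (by omega) hj (by omega)⟩)
          h0 h1 ch12 ch23 ch01 h2⟩
      · -- P2
        exact Or.inr (Or.inr ⟨h0, h1, h2⟩)
    · rcases tot v (w 2) (hvne 2 (by omega)) with h2 | h2
      · -- F2 : (w0, w1, v, w2)
        refine Or.inl ⟨_, good_front hk hw (w 0) (w 1) v (w 2)
          (wne 0 1 (by omega) (by omega) (by omega)) (hv 0 (by omega))
          (wne 0 2 (by omega) (by omega) (by omega)) (hv 1 (by omega))
          (wne 1 2 (by omega) (by omega) (by omega)) (hvne 2 (by omega))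
          (fun j h3 hj => ⟨wne 0 j (by omega) hj (by omega), wne 1 j (by omega) hj (by omega),
            hvne j hj, wne 2 j (by omega) hj (by omega)⟩)
          ch01 h1 h2 ch23 h0 ch12⟩
      · -- F3 : (w0, w1, w2, v)
        refine Or.inl ⟨_, good_front hk hw (w 0) (w 1) (w 2) v
          (wne 0 1 (by omega) (by omega) (by omega)) (wne 0 2 (by omega) (by omega) (by omega))
          (hv 0 (by omega)) (wne 1 2 (by omega) (by omega) (by omega)) (hv 1 (by omega))
          (hv 2 (by omega))
          (fun j h3 hj => ⟨wne 0 j (by omega) hj (by omega), wne 1 j (by omega) hj (by omega),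
            wne 2 j (by omega) hj (by omega), hvne j hj⟩)
          ch01 ch12 h2 (hB 3 (by omega) (by omega)) c02 h1⟩

lemma step {V : Type*} {r : V → V → Prop} (ht : IsTournament r) {k : ℕ} (hk : 4 ≤ k)
    {w : ℕ → V} (hw : GoodFun r k w) (v y : V) (hvy : v ≠ y)
    (hv : ∀ j, j < k → w j ≠ v) (hy : ∀ j, j < k → w j ≠ y) :
    ∃ w', GoodFun r (k + 1) w' := by
  rcases ensureB ht hk hw v hv with h | hBv
  · exact h
  rcases resolve ht hk hw v hv hBv with h | hPv
  · exact h
  rcases ensureB ht hk hw y hy with h | hBy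
  · exact h
  rcases resolve ht hk hw y hy hBy with h | hPy
  · exact h
  have tvy : r v y ∨ r y v := by
    by_cases h : r v y
    · exact Or.inl h
    · exact Or.inr ((ht.2 y v hvy.symm).mpr h)
  have wne : ∀ p q : ℕ, p < k → q < k → p ≠ q → w p ≠ w q :=
    fun p q hp hq hpq e => hpq (hw.1 p q hp hq e)
  have ch01 : r (w 0) (w 1) := hw.2.1 0 (by omega)
  have c02 : r (w 0) (w 2) := hw.2.2.1
  have c13 : r (w 1) (w 3) := hw.2.2.2
  have ch23 : r (w 2) (w 3) := hw.2.1 2 (by omega)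
  have hvne : ∀ j, j < k → v ≠ w j := fun j hj => (hv j hj).symm
  have hyne : ∀ j, j < k → y ≠ w j := fun j hj => (hy j hj).symm
  rcases hPv with ⟨pv0, pv1, pv2⟩ | ⟨pv0, pv1, pv2⟩ <;>
    rcases hPy with ⟨py0, py1, py2⟩ | ⟨py0, py1, py2⟩ <;>
    rcases tvy with hd | hd
  · -- P1 v, P1 y, v→y : (v, y, w0, w2)
    exact ⟨_, good_front hk hw v y (w 0) (w 2) hvy (hvne 0 (by omega)) (hvne 2 (by omega))
      (hyne 0 (by omega)) (hyne 2 (by omega)) (wne 0 2 (by omega) (by omega) (by omega))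
      (fun j h3 hj => ⟨hvne j hj, hyne j hj, wne 0 j (by omega) hj (by omega),
        wne 2 j (by omega) hj (by omega)⟩)
      hd py0 c02 ch23 pv0 py2⟩
  · -- P1 v, P1 y, y→v : (y, v, w0, w2)
    exact ⟨_, good_front hk hw y v (w 0) (w 2) hvy.symm (hyne 0 (by omega)) (hyne 2 (by omega))
      (hvne 0 (by omega)) (hvne 2 (by omega)) (wne 0 2 (by omega) (by omega) (by omega))
      (fun j h3 hj => ⟨hyne j hj, hvne j hj, wne 0 j (by omega) hj (by omega),
        wne 2 j (by omega) hj (by omega)⟩)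
      hd pv0 c02 ch23 py0 pv2⟩
  · -- P1 v, P2 y, v→y : (v, w0, y, w1)
    exact ⟨_, good_front hk hw v (w 0) y (w 1) (hvne 0 (by omega)) hvy (hvne 1 (by omega))
      (hy 0 (by omega)) (wne 0 1 (by omega) (by omega) (by omega)) (hyne 1 (by omega))
      (fun j h3 hj => ⟨hvne j hj, wne 0 j (by omega) hj (by omega), hyne j hj,
        wne 1 j (by omega) hj (by omega)⟩)
      pv0 py0 py1 c13 hd ch01⟩
  · -- P1 v, P2 y, y→v : (w0, y, w1, v)
    exact ⟨_, good_front hk hw (w 0) y (w 1) v (hy 0 (by omega))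
      (wne 0 1 (by omega) (by omega) (by omega)) (hv 0 (by omega)) (hyne 1 (by omega))
      (Ne.symm hvy) (hv 1 (by omega))
      (fun j h3 hj => ⟨wne 0 j (by omega) hj (by omega), hyne j hj,
        wne 1 j (by omega) hj (by omega), hvne j hj⟩)
      py0 py1 pv1 (hBv 3 (by omega) (by omega)) ch01 hd⟩
  · -- P2 v, P1 y, v→y : (w0, v, w1, y)
    exact ⟨_, good_front hk hw (w 0) v (w 1) y (hv 0 (by omega))
      (wne 0 1 (by omega) (by omega) (by omega)) (hy 0 (by omega)) (hvne 1 (by omega))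
      hvy (hy 1 (by omega))
      (fun j h3 hj => ⟨wne 0 j (by omega) hj (by omega), hvne j hj,
        wne 1 j (by omega) hj (by omega), hyne j hj⟩)
      pv0 pv1 py1 (hBy 3 (by omega) (by omega)) ch01 hd⟩
  · -- P2 v, P1 y, y→v : (y, w0, v, w1)
    exact ⟨_, good_front hk hw y (w 0) v (w 1) (hyne 0 (by omega)) hvy.symm (hyne 1 (by omega))
      (hv 0 (by omega)) (wne 0 1 (by omega) (by omega) (by omega)) (hvne 1 (by omega))
      (fun j h3 hj => ⟨hyne j hj, wne 0 j (by omega) hj (by omega), hvne j hj,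
        wne 1 j (by omega) hj (by omega)⟩)
      py0 pv0 pv1 c13 hd ch01⟩
  · -- P2 v, P2 y, v→y : (w0, v, y, w1)
    exact ⟨_, good_front hk hw (w 0) v y (w 1) (hv 0 (by omega)) (hy 0 (by omega))
      (wne 0 1 (by omega) (by omega) (by omega)) hvy (hvne 1 (by omega)) (hyne 1 (by omega))
      (fun j h3 hj => ⟨wne 0 j (by omega) hj (by omega), hvne j hj, hyne j hj,
        wne 1 j (by omega) hj (by omega)⟩)
      pv0 hd py1 c13 py0 pv1⟩
  · -- P2 v, P2 y, y→v : (w0, y, v, w1)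
    exact ⟨_, good_front hk hw (w 0) y v (w 1) (hy 0 (by omega)) (hv 0 (by omega))
      (wne 0 1 (by omega) (by omega) (by omega)) hvy.symm (hyne 1 (by omega)) (hvne 1 (by omega))
      (fun j h3 hj => ⟨wne 0 j (by omega) hj (by omega), hyne j hj, hvne j hj,
        wne 1 j (by omega) hj (by omega)⟩)
      py0 hd pv1 c13 pv0 py1⟩

lemma main_good {V : Type} [Fintype V] {r : V → V → Prop} (ht : IsTournament r) :
    ∀ k, 4 ≤ k → k + 1 ≤ Fintype.card V → ∃ w : ℕ → V, GoodFun r k w := by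
  intro k hk
  induction k, hk using Nat.le_induction with
  | base => intro hcard; exact base_case ht hcard
  | succ k hk ih =>
    intro hcard
    obtain ⟨w, hw⟩ := ih (by omega)
    classical
    set S : Finset V := (Finset.range k).image w with hS
    have hScard : S.card ≤ k := (Finset.card_image_le).trans (by simp)
    have hcompl : 1 < Sᶜ.card := by
      have := Finset.card_compl S
      omega
    obtain ⟨v, hvmem, y, hymem, hvy⟩ := Finset.one_lt_card.1 hcompl
    have hv : ∀ j, j < k → w j ≠ v := by
      intro j hj e
      have : v ∈ S := by
        rw [hS]; exact Finset.mem_image.2 ⟨j, Finset.mem_range.2 hj, e⟩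
      simp at hvmem; exact hvmem this
    have hy : ∀ j, j < k → w j ≠ y := by
      intro j hj e
      have : y ∈ S := by
        rw [hS]; exact Finset.mem_image.2 ⟨j, Finset.mem_range.2 hj, e⟩
      simp at hymem; exact hymem this
    exact step ht hk hw v y hvy hv hy


/-- For `n ≥ 4`, every tournament on `n + 1` vertices contains a copy of
`CP(2,2; n-4)`. -/
theorem tournament_contains_cp (n : ℕ) (hn : 4 ≤ n)
    (V : Type) (_ : Fintype V) (r : V → V → Prop) (ht : IsTournament r)
    (hcard : Fintype.card V = n + 1) : Contains r (cpArc (n - 4)) := by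
  obtain ⟨w, hw⟩ := main_good ht n hn (by omega)
  refine ⟨fun i => w i.val, ?_, ?_⟩
  · intro i j hij
    have hi := i.isLt
    have hj := j.isLt
    exact Fin.ext (hw.1 i.val j.val (by omega) (by omega) hij)
  · intro u v huv
    have hv := v.isLt
    rcases huv with ⟨hu, hv1⟩ | ⟨hu, hv1⟩ | ⟨hu, hv1⟩ | ⟨hu, hv1⟩ | ⟨hu, hv1⟩
    · show r (w u.val) (w v.val); rw [hu, hv1]; exact hw.2.1 0 (by omega)
    · show r (w u.val) (w v.val); rw [hu, hv1]; exact hw.2.2.1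
    · show r (w u.val) (w v.val); rw [hu, hv1]; exact hw.2.2.2
    · show r (w u.val) (w v.val); rw [hu, hv1]; exact hw.2.1 2 (by omega)
    · show r (w u.val) (w v.val); rw [hv1]; exact hw.2.1 u.val (by omega)
end

section
/- Let n ≥ 4 and let T be the tournament on n vertices constructed as follows: take a tournament T_4^* on 4 vertices consisting of a directed 3-cycle all of whose vertices dominate a fourth vertex, take any tournament T' on the remaining n−4 vertices, and orient every arc from a vertex of T_4^* to a vertex of T'. Then T contains no copy of CP(2,2;n−4). -/
private lemma cp_quad_aux {V : Type} (r : V → V → Prop) (c0 c1 c2 w a b c d : V)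
    (n10 : ¬ r c1 c0) (n21 : ¬ r c2 c1) (n02 : ¬ r c0 c2)
    (nw0 : ¬ r w c0) (nw1 : ¬ r w c1) (nw2 : ¬ r w c2)
    (ha : a = c0 ∨ a = c1 ∨ a = c2 ∨ a = w)
    (hb : b = c0 ∨ b = c1 ∨ b = c2 ∨ b = w)
    (hc : c = c0 ∨ c = c1 ∨ c = c2 ∨ c = w)
    (hd : d = c0 ∨ d = c1 ∨ d = c2 ∨ d = w)
    (nab : a ≠ b) (nac : a ≠ c) (nad : a ≠ d)
    (nbc : b ≠ c) (nbd : b ≠ d) (ncd : c ≠ d)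
    (rab : r a b) (rac : r a c) (rbd : r b d) (rcd : r c d) : False := by
  rcases ha with h|h|h|h <;> subst h <;>
    rcases hb with h|h|h|h <;> subst h <;>
    rcases hc with h|h|h|h <;> subst h <;>
    rcases hd with h|h|h|h <;> subst h <;>
    tauto

/-- The lower-bound construction for Theorem 3: a tournament on `n ≥ 4`
vertices consisting of a directed triangle `c0 → c1 → c2 → c0` dominating a
vertex `w`, with all four of these vertices dominating all remaining vertices
(which induce an arbitrary tournament), contains no copy of `CP(2,2; n-4)`. -/
theorem cp_lower_bound_construction (n : ℕ) (hn : 4 ≤ n)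
    (V : Type) (_ : Fintype V) (r : V → V → Prop) (ht : IsTournament r)
    (hcard : Fintype.card V = n) (c0 c1 c2 w : V)
    (hd01 : c0 ≠ c1) (hd02 : c0 ≠ c2) (hd0w : c0 ≠ w)
    (hd12 : c1 ≠ c2) (hd1w : c1 ≠ w) (hd2w : c2 ≠ w)
    (h01 : r c0 c1) (h12 : r c1 c2) (h20 : r c2 c0)
    (h0w : r c0 w) (h1w : r c1 w) (h2w : r c2 w)
    (hdom : ∀ x ∈ ({c0, c1, c2, w} : Set V), ∀ y ∉ ({c0, c1, c2, w} : Set V),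
      r x y) :
    ¬ Contains r (cpArc (n - 4)) := by
  rintro ⟨φ, hinj, hhom⟩
  -- tournament negative facts
  have n10 : ¬ r c1 c0 := (ht.2 c0 c1 hd01).mp h01
  have n21 : ¬ r c2 c1 := (ht.2 c1 c2 hd12).mp h12
  have n02 : ¬ r c0 c2 := (ht.2 c2 c0 hd02.symm).mp h20
  have nw0 : ¬ r w c0 := (ht.2 c0 w hd0w).mp h0w
  have nw1 : ¬ r w c1 := (ht.2 c1 w hd1w).mp h1w
  have nw2 : ¬ r w c2 := (ht.2 c2 w hd2w).mp h2w
  -- closure: arcs into A come from A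
  have hclosed : ∀ u v : Fin (n - 4 + 4), cpArc (n - 4) u v →
      φ v ∈ ({c0, c1, c2, w} : Set V) → φ u ∈ ({c0, c1, c2, w} : Set V) := by
    intro u v harc hv
    by_contra hu
    have hne : φ u ≠ φ v := fun h => hu (h ▸ hv)
    exact (ht.2 _ _ hne).mp (hhom u v harc) (hdom (φ v) hv (φ u) hu)
  -- chain lemma: walk back along the path
  have hchain : ∀ k, ∀ h : 3 + k < n - 4 + 4, φ ⟨3 + k, h⟩ ∈ ({c0, c1, c2, w} : Set V) →
      ∀ j, 3 ≤ j → ∀ hj : j < n - 4 + 4, j ≤ 3 + k →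
      φ ⟨j, hj⟩ ∈ ({c0, c1, c2, w} : Set V) := by
    intro k
    induction k with
    | zero =>
      intro h hm j h3 hj hle
      have hj3 : j = 3 := by omega
      subst hj3
      exact hm
    | succ k ih =>
      intro h hm j h3 hj hle
      have hk : 3 + k < n - 4 + 4 := by omega
      have harc : cpArc (n - 4) ⟨3 + k, hk⟩ ⟨3 + (k + 1), h⟩ :=
        Or.inr (Or.inr (Or.inr (Or.inr ⟨Nat.le_add_right 3 k, rfl⟩)))
      have hprev : φ ⟨3 + k, hk⟩ ∈ ({c0, c1, c2, w} : Set V) := hclosed _ _ harc hm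
      rcases Nat.lt_or_ge j (3 + (k + 1)) with hlt' | hge
      · exact ih hk hprev j h3 hj (by omega)
      · have hj' : j = 3 + (k + 1) := by omega
        subst hj'
        exact hm
  -- surjectivity
  have hcard' : Fintype.card (Fin (n - 4 + 4)) = Fintype.card V := by
    rw [Fintype.card_fin, hcard]; omega
  have hbij : Function.Bijective φ :=
    (Fintype.bijective_iff_injective_and_card φ).mpr ⟨hinj, hcard'⟩
  obtain ⟨u0, hu0⟩ := hbij.2 c0
  obtain ⟨u1, hu1⟩ := hbij.2 c1
  obtain ⟨u2, hu2⟩ := hbij.2 c2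
  obtain ⟨uw, huw⟩ := hbij.2 w
  have hv01 : u0.val ≠ u1.val := by
    intro h
    have := congrArg φ (Fin.ext h)
    rw [hu0, hu1] at this
    exact hd01 this
  have hv02 : u0.val ≠ u2.val := by
    intro h
    have := congrArg φ (Fin.ext h)
    rw [hu0, hu2] at this
    exact hd02 this
  have hv0w : u0.val ≠ uw.val := by
    intro h
    have := congrArg φ (Fin.ext h)
    rw [hu0, huw] at this
    exact hd0w this
  have hv12 : u1.val ≠ u2.val := by
    intro h
    have := congrArg φ (Fin.ext h)
    rw [hu1, hu2] at this
    exact hd12 this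
  have hv1w : u1.val ≠ uw.val := by
    intro h
    have := congrArg φ (Fin.ext h)
    rw [hu1, huw] at this
    exact hd1w this
  have hv2w : u2.val ≠ uw.val := by
    intro h
    have := congrArg φ (Fin.ext h)
    rw [hu2, huw] at this
    exact hd2w this
  -- some preimage has index ≥ 3
  have hexists : ∃ u : Fin (n - 4 + 4), 3 ≤ u.val ∧ φ u ∈ ({c0, c1, c2, w} : Set V) := by
    by_contra hno
    push_neg at hno
    have m0 : φ u0 ∈ ({c0, c1, c2, w} : Set V) := by rw [hu0]; simp
    have m1 : φ u1 ∈ ({c0, c1, c2, w} : Set V) := by rw [hu1]; simp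
    have m2 : φ u2 ∈ ({c0, c1, c2, w} : Set V) := by rw [hu2]; simp
    have mw : φ uw ∈ ({c0, c1, c2, w} : Set V) := by rw [huw]; simp
    have l0 : ¬ 3 ≤ u0.val := fun h => hno u0 h m0
    have l1 : ¬ 3 ≤ u1.val := fun h => hno u1 h m1
    have l2 : ¬ 3 ≤ u2.val := fun h => hno u2 h m2
    have lw : ¬ 3 ≤ uw.val := fun h => hno uw h mw
    omega
  obtain ⟨u, hu3, huA⟩ := hexists
  have h0lt : (0 : ℕ) < n - 4 + 4 := by omega
  have h1lt : (1 : ℕ) < n - 4 + 4 := by omega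
  have h2lt : (2 : ℕ) < n - 4 + 4 := by omega
  have h3lt : (3 : ℕ) < n - 4 + 4 := by omega
  have h3A : φ ⟨3, h3lt⟩ ∈ ({c0, c1, c2, w} : Set V) := by
    have hk : 3 + (u.val - 3) < n - 4 + 4 := by omega
    have heq : (⟨3 + (u.val - 3), hk⟩ : Fin (n - 4 + 4)) = u := Fin.ext (by simp; omega)
    have hm : φ ⟨3 + (u.val - 3), hk⟩ ∈ ({c0, c1, c2, w} : Set V) := by rw [heq]; exact huA
    exact hchain (u.val - 3) hk hm 3 le_rfl h3lt (by omega)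
  have arc01 : cpArc (n - 4) ⟨0, h0lt⟩ ⟨1, h1lt⟩ := Or.inl ⟨rfl, rfl⟩
  have arc02 : cpArc (n - 4) ⟨0, h0lt⟩ ⟨2, h2lt⟩ := Or.inr (Or.inl ⟨rfl, rfl⟩)
  have arc13 : cpArc (n - 4) ⟨1, h1lt⟩ ⟨3, h3lt⟩ := Or.inr (Or.inr (Or.inl ⟨rfl, rfl⟩))
  have arc23 : cpArc (n - 4) ⟨2, h2lt⟩ ⟨3, h3lt⟩ := Or.inr (Or.inr (Or.inr (Or.inl ⟨rfl, rfl⟩)))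
  have h1A : φ ⟨1, h1lt⟩ ∈ ({c0, c1, c2, w} : Set V) := hclosed _ _ arc13 h3A
  have h2A : φ ⟨2, h2lt⟩ ∈ ({c0, c1, c2, w} : Set V) := hclosed _ _ arc23 h3A
  have h0A : φ ⟨0, h0lt⟩ ∈ ({c0, c1, c2, w} : Set V) := hclosed _ _ arc01 h1A
  have ra01 : r (φ ⟨0, h0lt⟩) (φ ⟨1, h1lt⟩) := hhom _ _ arc01
  have ra02 : r (φ ⟨0, h0lt⟩) (φ ⟨2, h2lt⟩) := hhom _ _ arc02
  have ra13 : r (φ ⟨1, h1lt⟩) (φ ⟨3, h3lt⟩) := hhom _ _ arc13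
  have ra23 : r (φ ⟨2, h2lt⟩) (φ ⟨3, h3lt⟩) := hhom _ _ arc23
  have ne01 : φ ⟨0, h0lt⟩ ≠ φ ⟨1, h1lt⟩ := fun h => by
    have := hinj h; simp [Fin.ext_iff] at this
  have ne02 : φ ⟨0, h0lt⟩ ≠ φ ⟨2, h2lt⟩ := fun h => by
    have := hinj h; simp [Fin.ext_iff] at this
  have ne03 : φ ⟨0, h0lt⟩ ≠ φ ⟨3, h3lt⟩ := fun h => by
    have := hinj h; simp [Fin.ext_iff] at this
  have ne12 : φ ⟨1, h1lt⟩ ≠ φ ⟨2, h2lt⟩ := fun h => by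
    have := hinj h; simp [Fin.ext_iff] at this
  have ne13 : φ ⟨1, h1lt⟩ ≠ φ ⟨3, h3lt⟩ := fun h => by
    have := hinj h; simp [Fin.ext_iff] at this
  have ne23 : φ ⟨2, h2lt⟩ ≠ φ ⟨3, h3lt⟩ := fun h => by
    have := hinj h; simp [Fin.ext_iff] at this
  simp only [Set.mem_insert_iff, Set.mem_singleton_iff] at h0A h1A h2A h3A
  exact cp_quad_aux r c0 c1 c2 w _ _ _ _ n10 n21 n02 nw0 nw1 nw2
    h0A h1A h2A h3A ne01 ne02 ne03 ne12 ne13 ne23 ra01 ra02 ra13 ra23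
end

section
/- Let n ≥ 5 and let T be a tournament on n+1 vertices containing no copy of CP(2,2;n−4). Suppose v_1,…,v_{n−1} are distinct vertices of T such that (v_1,v_2),(v_1,v_3),(v_2,v_4),(v_3,v_4) and (v_i,v_{i+1}) for 4 ≤ i ≤ n−2 are all arcs of T (so they form a copy of CP(2,2;n−5)), and let v be any of the two vertices of T not among v_1,…,v_{n−1}. Then (v,v_i) is an arc of T for every i with 4 ≤ i ≤ n−1. -/
set_option maxHeartbeats 1000000

/-- Claim 2 in the proof of Theorem 3: let `n ≥ 5` and let `T` be a tournament
on `n + 1` vertices with no copy of `CP(2,2; n-4)`. If the distinct vertices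
`w 0, …, w (n-2)` (the paper's `v_1, …, v_{n-1}`) form a copy of
`CP(2,2; n-5)` and `v` is not among them, then `v` dominates `w i` for every
`i ≥ 3` (the paper's `v_4, …, v_{n-1}`). -/
theorem claim_dominates_path (n : ℕ) (hn : 5 ≤ n)
    (V : Type) (_ : Fintype V) (r : V → V → Prop) (ht : IsTournament r)
    (hcard : Fintype.card V = n + 1)
    (hno : ¬ Contains r (cpArc (n - 4)))
    (w : Fin (n - 1) → V) (hinj : Function.Injective w)
    (h01 : r (w ⟨0, by omega⟩) (w ⟨1, by omega⟩))
    (h02 : r (w ⟨0, by omega⟩) (w ⟨2, by omega⟩))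
    (h13 : r (w ⟨1, by omega⟩) (w ⟨3, by omega⟩))
    (h23 : r (w ⟨2, by omega⟩) (w ⟨3, by omega⟩))
    (hpath : ∀ i : Fin (n - 1), ∀ h : i.val + 1 < n - 1, 3 ≤ i.val →
      r (w i) (w ⟨i.val + 1, h⟩))
    (v : V) (hv : v ∉ Set.range w) :
    ∀ i : Fin (n - 1), 3 ≤ i.val → r v (w i) := by
  classical
  by_contra hcon
  push_neg at hcon
  obtain ⟨i, hi3, hirv⟩ := hcon
  have hvne : ∀ j : Fin (n - 1), v ≠ w j := fun j h => hv ⟨j, h.symm⟩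
  have hflip : ∀ j : Fin (n - 1), ¬ r v (w j) → r (w j) v := fun j h =>
    ((ht.2 (w j) v (fun he => hvne j he.symm)).mpr h)
  have hflip' : ∀ j : Fin (n - 1), ¬ r (w j) v → r v (w j) := by
    intro j h
    by_contra h2
    exact h (hflip j h2)
  set P : ℕ → Prop := fun m => ∃ h : m < n - 1, 3 ≤ m ∧ r (w ⟨m, h⟩) v with hP
  have hPi : P i.val := ⟨i.isLt, hi3, by
    have := hflip i hirv
    convert this using 2⟩
  set i0 := Nat.findGreatest P (n - 2) with hi0def
  have hspec : P i0 := Nat.findGreatest_spec (m := i.val) (by first | omega | (simp only [Fin.val_mk]; omega)) hPi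
  obtain ⟨hi0lt, hi03, hi0r⟩ := hspec
  have hmax : ∀ m (h : m < n - 1), i0 < m → ¬ r (w ⟨m, h⟩) v := by
    intro m h hm hr
    exact Nat.findGreatest_is_greatest hm (by first | omega | (simp only [Fin.val_mk]; omega)) ⟨h, by omega, hr⟩
  -- build the copy of CP(2,2; n-4) on Fin (n - 4 + 4)
  apply hno
  have hfin : n - 4 + 4 = n := by omega
  set φ : Fin (n - 4 + 4) → V := fun j => if h : j.val ≤ i0 then w ⟨j.val, by omega⟩
    else if h2 : j.val = i0 + 1 then v else w ⟨j.val - 1, by omega⟩ with hφdef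
  have hle : ∀ (j : Fin (n - 4 + 4)) (h : j.val ≤ i0), φ j = w ⟨j.val, by omega⟩ :=
    fun j h => dif_pos h
  have heqv : ∀ (j : Fin (n - 4 + 4)), j.val = i0 + 1 → φ j = v := by
    intro j h
    show dite _ _ _ = v
    rw [dif_neg (by first | omega | (simp only [Fin.val_mk]; omega)), dif_pos h]
  have hgt : ∀ (j : Fin (n - 4 + 4)) (h : i0 + 1 < j.val), φ j = w ⟨j.val - 1, by omega⟩ := by
    intro j h
    show dite _ _ _ = w _
    rw [dif_neg (by first | omega | (simp only [Fin.val_mk]; omega)), dif_neg (by first | omega | (simp only [Fin.val_mk]; omega))]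
  refine ⟨φ, ?_, ?_⟩
  · intro a b hab
    have hav : a.val < n - 4 + 4 := a.isLt
    have hbv : b.val < n - 4 + 4 := b.isLt
    rcases Nat.lt_trichotomy a.val (i0 + 1) with ha | ha | ha <;>
      rcases Nat.lt_trichotomy b.val (i0 + 1) with hb | hb | hb
    · rw [hle a (by first | omega | (simp only [Fin.val_mk]; omega)), hle b (by first | omega | (simp only [Fin.val_mk]; omega))] at hab
      exact Fin.ext (by simpa using congrArg Fin.val (hinj hab))
    · rw [hle a (by first | omega | (simp only [Fin.val_mk]; omega)), heqv b hb] at hab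
      exact absurd hab.symm (hvne _)
    · rw [hle a (by first | omega | (simp only [Fin.val_mk]; omega)), hgt b hb] at hab
      have := congrArg Fin.val (hinj hab)
      simp at this; omega
    · rw [heqv a ha, hle b (by first | omega | (simp only [Fin.val_mk]; omega))] at hab
      exact absurd hab (hvne _)
    · exact Fin.ext (by first | omega | (simp only [Fin.val_mk]; omega))
    · rw [heqv a ha, hgt b hb] at hab
      exact absurd hab (hvne _)
    · rw [hgt a ha, hle b (by first | omega | (simp only [Fin.val_mk]; omega))] at hab
      have := congrArg Fin.val (hinj hab)
      simp at this; omega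
    · rw [hgt a ha, heqv b hb] at hab
      exact absurd hab.symm (hvne _)
    · rw [hgt a ha, hgt b hb] at hab
      have := congrArg Fin.val (hinj hab)
      simp at this
      exact Fin.ext (by first | omega | (simp only [Fin.val_mk]; omega))
  · intro u u' harc
    have huv : u.val < n - 4 + 4 := u.isLt
    have huv' : u'.val < n - 4 + 4 := u'.isLt
    rcases harc with ⟨hu, hu'⟩ | ⟨hu, hu'⟩ | ⟨hu, hu'⟩ | ⟨hu, hu'⟩ | ⟨hu, hu'⟩
    · rw [hle u (by first | omega | (simp only [Fin.val_mk]; omega)), hle u' (by first | omega | (simp only [Fin.val_mk]; omega))]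
      convert h01 using 2 <;> exact Fin.ext (by first | omega | (simp only [Fin.val_mk]; omega))
    · rw [hle u (by first | omega | (simp only [Fin.val_mk]; omega)), hle u' (by first | omega | (simp only [Fin.val_mk]; omega))]
      convert h02 using 2 <;> exact Fin.ext (by first | omega | (simp only [Fin.val_mk]; omega))
    · rw [hle u (by first | omega | (simp only [Fin.val_mk]; omega)), hle u' (by first | omega | (simp only [Fin.val_mk]; omega))]
      convert h13 using 2 <;> exact Fin.ext (by first | omega | (simp only [Fin.val_mk]; omega))
    · rw [hle u (by first | omega | (simp only [Fin.val_mk]; omega)), hle u' (by first | omega | (simp only [Fin.val_mk]; omega))]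
      convert h23 using 2 <;> exact Fin.ext (by first | omega | (simp only [Fin.val_mk]; omega))
    · -- path arcs: 3 ≤ u.val, u'.val = u.val + 1
      rcases Nat.lt_trichotomy u.val i0 with hlt | heq | hgt'
      · rw [hle u (by first | omega | (simp only [Fin.val_mk]; omega)), hle u' (by first | omega | (simp only [Fin.val_mk]; omega))]
        have := hpath ⟨u.val, by omega⟩ (by first | omega | (simp only [Fin.val_mk]; omega)) (by first | omega | (simp only [Fin.val_mk]; omega))
        convert this using 2 <;> exact Fin.ext (by first | omega | (simp only [Fin.val_mk]; omega))
      · rw [hle u (by first | omega | (simp only [Fin.val_mk]; omega)), heqv u' (by first | omega | (simp only [Fin.val_mk]; omega))]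
        convert hi0r using 2
        exact Fin.ext heq
      · rcases Nat.lt_or_ge u.val (i0 + 2) with hlt2 | hge2
        · -- u.val = i0 + 1 : r v (w (i0+1))
          rw [heqv u (by first | omega | (simp only [Fin.val_mk]; omega)), hgt u' (by first | omega | (simp only [Fin.val_mk]; omega))]
          exact hflip' ⟨u'.val - 1, by omega⟩
            (hmax (u'.val - 1) (by first | omega | (simp only [Fin.val_mk]; omega)) (by first | omega | (simp only [Fin.val_mk]; omega)))
        · -- u.val ≥ i0 + 2 : r (w (u-1)) (w u)
          rw [hgt u (by first | omega | (simp only [Fin.val_mk]; omega)), hgt u' (by first | omega | (simp only [Fin.val_mk]; omega))]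
          have := hpath ⟨u.val - 1, by omega⟩ (by first | omega | (simp only [Fin.val_mk]; omega)) (by first | omega | (simp only [Fin.val_mk]; omega))
          convert this using 2 <;> exact Fin.ext (by first | omega | (simp only [Fin.val_mk]; omega))
end
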